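/- arXiv:2408.16922 — 4 statements merged into one kernel-verified Lean document; each statement's English description precedes it below -/
import Mathlib

section
/- Let (W,S) be a Coxeter system with S finite and let B_W be its Artin braid group with generators β_s. For any element w of W, if w = s₁⋯sₙ and w = t₁⋯tₙ are two reduced expressions of w, then β_{s₁}⋯β_{sₙ} = β_{t₁}⋯β_{tₙ} in B_W (so the lift β_w is well defined). -/
/-!
Let `(W, S)` be a Coxeter system with `S` finite and let `B_W` be its Artin braid group,
with generators `β_s` and the braid relations. If two reduced words represent the same
element `w` of `W`, then the corresponding products of braid generators agree in `B_W`
(so the lift `β_w` is well defined).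
-/

open CoxeterSystem

/-- The set of braid relations in the free group on `B`. -/
def braidRelsSet {B : Type*} (M : CoxeterMatrix B) : Set (FreeGroup B) :=
  ⋃ (i : B) (j : B),
    {((braidWord M i j).map FreeGroup.of).prod * (((braidWord M j i).map FreeGroup.of).prod)⁻¹}

/-- The Artin braid group of the Coxeter matrix `M`. -/
abbrev BraidGroup {B : Type*} (M : CoxeterMatrix B) : Type _ :=
  PresentedGroup (braidRelsSet M)

/-- The generator `β_i` of the braid group. -/
def braidGen {B : Type*} (M : CoxeterMatrix B) (i : B) : BraidGroup M :=
  PresentedGroup.of i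

section MatsumotoProof

open CoxeterSystem List

namespace MatsumotoAux

variable {B : Type*} {W : Type*} [Group W] {M : CoxeterMatrix B} (cs : CoxeterSystem M W)

local prefix:100 "s" => cs.simple
local prefix:100 "π" => cs.wordProd

/-- Generic conjugation condition lemma. -/
lemma conj_cond {g h y t : W} : (g * t * h = y) ↔ (t = g⁻¹ * (y * h⁻¹)) := by
  constructor
  · intro hh; rw [← hh]; group
  · intro hh; rw [hh]; group

lemma inv_simple_mul (i j : B) : (s i * s j)⁻¹ = s j * s i := by
  rw [mul_inv_rev, cs.inv_simple, cs.inv_simple]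

lemma conj_simple_pow (i j : B) (n : ℕ) :
    s j * (s i * s j) ^ n * s j = ((s i * s j)⁻¹) ^ n := by
  have h0 : (MulAut.conj (s j)) ((s i * s j) ^ n) = ((s i * s j)⁻¹) ^ n := by
    rw [map_pow]
    congr 1
    rw [MulAut.conj_apply, cs.inv_simple, inv_simple_mul cs i j,
      ← mul_assoc, cs.simple_mul_simple_cancel_right]
  rw [MulAut.conj_apply, cs.inv_simple] at h0
  exact h0

lemma simple_mul_pow (i j : B) (n : ℕ) :
    s j * (s i * s j) ^ n = ((s i * s j)⁻¹) ^ n * s j := by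
  have h2 := congrArg (fun x => x * s j) (conj_simple_pow cs i j n)
  simpa only [mul_assoc, cs.simple_mul_simple_self, mul_one] using h2

lemma simple_mul_pow' (i j : B) (n : ℕ) :
    s j * ((s i * s j)⁻¹) ^ n = (s i * s j) ^ n * s j := by
  rw [← conj_simple_pow cs i j n, ← mul_assoc, ← mul_assoc, cs.simple_mul_simple_self, one_mul]

lemma L_ba (i j : B) (w : W) : s j * (s i * w) = (s i * s j)⁻¹ * w := by
  rw [← mul_assoc, ← inv_simple_mul cs i j]

open Classical in
/-- The parity representation generator. -/
noncomputable def pf (i : B) : Function.End (W × ZMod 2) :=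
  fun p => (s i * p.1 * s i, p.2 + if p.1 = s i then 1 else 0)

open Classical in
lemma pf_pow_mul (i j : B) (n : ℕ) (t : W) (ε : ZMod 2) :
    ((pf cs i * pf cs j) ^ n) (t, ε) =
      ((s i * s j) ^ n * t * ((s i * s j)⁻¹) ^ n,
        ε + ∑ l ∈ Finset.range (2 * n),
          if t = ((s i * s j)⁻¹) ^ l * s j then (1 : ZMod 2) else 0) := by
  induction n with
  | zero => simp [Function.End.one_def]
  | succ n ih =>
    have hmul : ∀ (f g : Function.End (W × ZMod 2)) (p : W × ZMod 2), (f * g) p = f (g p) := by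
      intro f g p; rfl
    rw [pow_succ', hmul, ih, hmul]
    simp only [pf]
    have h2 : 2 * (n + 1) = (2 * n) + 1 + 1 := by ring
    rw [h2, Finset.sum_range_succ, Finset.sum_range_succ]
    have e2 : (((s i * s j) ^ n * t * ((s i * s j)⁻¹) ^ n) = s j)
        ↔ (t = ((s i * s j)⁻¹) ^ (2 * n) * s j) := by
      rw [conj_cond]
      have hv : ((s i * s j) ^ n)⁻¹ * (s j * ((((s i * s j)⁻¹) ^ n)⁻¹))
          = ((s i * s j)⁻¹) ^ (2 * n) * s j := by
        rw [inv_pow, inv_inv, simple_mul_pow cs i j n, ← mul_assoc, ← inv_pow, ← pow_add, two_mul]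
      rw [hv]
    have e1 : (s j * ((s i * s j) ^ n * t * ((s i * s j)⁻¹) ^ n) * s j = s i)
        ↔ (t = ((s i * s j)⁻¹) ^ (2 * n + 1) * s j) := by
      rw [show s j * ((s i * s j) ^ n * t * ((s i * s j)⁻¹) ^ n) * s j
          = (s j * (s i * s j) ^ n) * t * (((s i * s j)⁻¹) ^ n * s j) from by group]
      rw [conj_cond]
      have hv : (s j * (s i * s j) ^ n)⁻¹ * (s i * ((((s i * s j)⁻¹) ^ n * s j))⁻¹)
          = ((s i * s j)⁻¹) ^ (2 * n + 1) * s j := by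
        rw [mul_inv_rev, mul_inv_rev, cs.inv_simple, inv_pow, inv_inv]
        simp only [mul_assoc]
        rw [L_ba cs i j, simple_mul_pow cs i j n, ← inv_pow]
        group
      rw [hv]
    simp only [if_congr e2 rfl rfl, if_congr e1 rfl rfl, Prod.mk.injEq]
    constructor
    · show s i * (s j * ((s i * s j) ^ n * t * ((s i*s j)⁻¹) ^ n) * s j) * s i
          = (s i * s j) ^ (n+1) * t * ((s i * s j)⁻¹) ^ (n+1)
      rw [pow_succ' (s i * s j) n, pow_succ ((s i * s j)⁻¹) n, inv_simple_mul cs i j]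
      group
    · show _ + _ + _ = _
      show _ + (if s j * ((s i * s j) ^ n * t * ((s i * s j)⁻¹) ^ n) * s j = s i then (1:ZMod 2) else 0) = _
      rw [if_congr e1 rfl rfl]
      push_cast
      ring

open Classical in
lemma pf_liftable : M.IsLiftable (pf cs) := by
  intro i j
  have hrm : (s i * s j) ^ (M i j) = 1 := cs.simple_mul_simple_pow i j
  have hrm' : ((s i * s j)⁻¹) ^ (M i j) = 1 := by rw [inv_pow, hrm, inv_one]
  funext p
  obtain ⟨t, ε⟩ := p
  rw [pf_pow_mul cs i j (M i j) t ε]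
  have h1 : (s i * s j) ^ (M i j) * t * ((s i * s j)⁻¹) ^ (M i j) = t := by
    rw [hrm, hrm', one_mul, mul_one]
  rw [h1]
  have h2 : ∑ l ∈ Finset.range (2 * M i j),
      (if t = ((s i * s j)⁻¹) ^ l * s j then (1 : ZMod 2) else 0) = 0 := by
    have hper : ∀ l, ((s i * s j)⁻¹) ^ (M i j + l) = ((s i * s j)⁻¹) ^ l := by
      intro l; rw [pow_add, hrm', one_mul]
    rw [two_mul]
    rw [← Finset.sum_range_add_sum_Ico _ (Nat.le_add_right (M i j) (M i j))]
    rw [Finset.sum_Ico_eq_sum_range]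
    simp only [Nat.add_sub_cancel_left, hper]
    rw [← Finset.sum_add_distrib]
    apply Finset.sum_eq_zero
    intro l _
    split <;> decide
  rw [h2, add_zero]
  rfl

/-- The parity representation of `W`. -/
noncomputable def prep : W →* Function.End (W × ZMod 2) :=
  cs.lift ⟨pf cs, pf_liftable cs⟩

open Classical in
noncomputable def zcount (t : W) (l : List W) : ZMod 2 :=
  (l.map (fun u => if t = u then (1 : ZMod 2) else 0)).sum

open Classical in
lemma prep_word (ω : List B) (t : W) (ε : ZMod 2) :
    prep cs (π ω) (t, ε) = (π ω * t * (π ω)⁻¹, ε + zcount t (cs.rightInvSeq ω)) := by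
  induction ω with
  | nil => simp [zcount, Function.End.one_def]
  | cons i ω ih =>
    rw [cs.wordProd_cons, map_mul]
    have hmul : ∀ (f g : Function.End (W × ZMod 2)) (p : W × ZMod 2), (f * g) p = f (g p) := by
      intro f g p; rfl
    rw [hmul, ih]
    have hg : prep cs (s i) = pf cs i := cs.lift_apply_simple (pf_liftable cs) i
    rw [hg]
    simp only [pf]
    have e : (π ω * t * (π ω)⁻¹ = s i) ↔ (t = (π ω)⁻¹ * s i * π ω) := by
      rw [conj_cond, inv_inv, mul_assoc]
    have hris : cs.rightInvSeq (i :: ω) = ((π ω)⁻¹ * s i * π ω) :: cs.rightInvSeq ω := rfl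
    rw [hris, Prod.mk.injEq]
    constructor
    · show s i * (π ω * t * (π ω)⁻¹) * s i = _
      rw [mul_inv_rev, cs.inv_simple]
      group
    · show _ + _ = _
      rw [if_congr e rfl rfl]
      show _ = ε + zcount t _
      unfold zcount
      rw [List.map_cons, List.sum_cons]
      ring

open Classical in
lemma zcount_eq_of_wordProd_eq {ω₁ ω₂ : List B} (h : π ω₁ = π ω₂) (t : W) :
    zcount t (cs.rightInvSeq ω₁) = zcount t (cs.rightInvSeq ω₂) := by
  have h1 := prep_word cs ω₁ t 0
  have h2 := prep_word cs ω₂ t 0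
  rw [h] at h1
  rw [h1] at h2
  have := congrArg Prod.snd h2
  simpa using this

open Classical in
lemma mem_of_zcount_ne_zero {t : W} {l : List W} (h : zcount t l ≠ 0) : t ∈ l := by
  by_contra hmem
  apply h
  unfold zcount
  rw [List.sum_eq_zero]
  intro x hx
  simp only [List.mem_map] at hx
  obtain ⟨u, hu, rfl⟩ := hx
  rw [if_neg]
  intro hh; exact hmem (hh ▸ hu)

open Classical in
/-- Key: a right descent appears in the right inversion sequence of any word. -/
lemma simple_mem_rightInvSeq_of_descent {ω : List B} {i : B}
    (hdesc : cs.IsRightDescent (π ω) i) : s i ∈ cs.rightInvSeq ω := by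
  set w := π ω with hw
  obtain ⟨τ, hτred, hτ⟩ := cs.exists_reduced_word' (w * s i)
  have hτlen : cs.length (w * s i) = τ.length := by rw [hτ]; exact hτred
  have hword : π (τ.concat i) = w := by
    rw [cs.wordProd_concat, ← hτ, mul_assoc, cs.simple_mul_simple_self, mul_one]
  have hz := zcount_eq_of_wordProd_eq cs
    (show π (τ.concat i) = π ω from by rw [hword, hw]) (s i)
  have hconcat : cs.rightInvSeq (τ.concat i)
      = (List.map (MulAut.conj (s i)) (cs.rightInvSeq τ)).concat (s i) :=
    cs.rightInvSeq_concat τ i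
  by_contra hmem
  have hz0 : zcount (s i) (cs.rightInvSeq ω) = 0 := by
    by_contra hne
    exact hmem (mem_of_zcount_ne_zero hne)
  have hcond : ∀ u : W, (s i = (MulAut.conj (s i)) u) ↔ (s i = u) := by
    intro u
    rw [MulAut.conj_apply, eq_comm, conj_cond, inv_inv, cs.inv_simple,
      cs.simple_mul_simple_self, mul_one]
    exact eq_comm
  have hz1 : zcount (s i) (cs.rightInvSeq (τ.concat i)) = zcount (s i) (cs.rightInvSeq τ) + 1 := by
    rw [hconcat]
    unfold zcount
    rw [List.concat_eq_append, List.map_append, List.sum_append, List.map_map]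
    have hfun : ((fun u => if s i = u then (1:ZMod 2) else 0) ∘ (MulAut.conj (s i)))
        = (fun u => if s i = u then (1:ZMod 2) else 0) := by
      funext u
      simp only [Function.comp_apply]
      exact if_congr (hcond u) rfl rfl
    rw [hfun]
    simp
  rw [hz, hz0] at hz1
  have hne : zcount (s i) (cs.rightInvSeq τ) ≠ 0 := by
    intro h0
    rw [h0, zero_add] at hz1
    exact one_ne_zero hz1.symm
  have hmem' := mem_of_zcount_ne_zero hne
  obtain ⟨d, hd, hde⟩ := List.mem_iff_getElem.mp hmem'
  have hdlen : d < τ.length := by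
    have := cs.length_rightInvSeq τ; omega
  have hprod := cs.wordProd_mul_getD_rightInvSeq τ d
  rw [List.getD_eq_getElem _ _ hd, hde, ← hτ] at hprod
  have hww : w = π (τ.eraseIdx d) := by
    rw [← hprod, mul_assoc, cs.simple_mul_simple_self, mul_one]
  have hlen2 : cs.length w ≤ (τ.eraseIdx d).length := hww ▸ cs.length_wordProd_le _
  have herase : (τ.eraseIdx d).length + 1 = τ.length := List.length_eraseIdx_add_one hdlen
  unfold CoxeterSystem.IsRightDescent at hdesc
  omega

/-- The left exchange property. -/
lemma left_exchange {ω : List B} {i : B} (hdesc : cs.IsLeftDescent (π ω) i) :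
    ∃ d < ω.length, s i * π ω = π (ω.eraseIdx d) := by
  classical
  have hrev : cs.IsRightDescent (π ω.reverse) i := by
    unfold CoxeterSystem.IsRightDescent
    rw [cs.wordProd_reverse]
    unfold CoxeterSystem.IsLeftDescent at hdesc
    calc cs.length ((π ω)⁻¹ * s i) = cs.length ((π ω)⁻¹ * (s i)⁻¹) := by rw [cs.inv_simple]
      _ = cs.length ((s i * π ω)⁻¹) := by rw [← mul_inv_rev]
      _ = cs.length (s i * π ω) := cs.length_inv _
      _ < cs.length (π ω) := hdesc
      _ = cs.length ((π ω)⁻¹) := (cs.length_inv _).symm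
  have hmem : s i ∈ cs.rightInvSeq ω.reverse := simple_mem_rightInvSeq_of_descent cs hrev
  rw [cs.rightInvSeq_reverse, List.mem_reverse] at hmem
  obtain ⟨d, hd, hde⟩ := List.mem_iff_getElem.mp hmem
  have hdlen : d < ω.length := by
    have := cs.length_leftInvSeq ω; omega
  refine ⟨d, hdlen, ?_⟩
  have := cs.getD_leftInvSeq_mul_wordProd ω d
  rw [List.getD_eq_getElem _ _ hd, hde] at this
  exact this



noncomputable section Geometric

variable {B : Type*} [Fintype B] (M : CoxeterMatrix B)

open Classical Real

/-- The cosine matrix entries. -/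
def Kf (a b : B) : ℝ := -Real.cos (Real.pi / M a b)

lemma Kf_diag (a : B) : Kf M a a = 1 := by
  unfold Kf
  rw [M.diagonal a]
  norm_num

lemma Kf_symm (a b : B) : Kf M a b = Kf M b a := by
  unfold Kf
  rw [M.symmetric a b]

/-- Basis vector. -/
def ev (a : B) : B → ℝ := fun x => if x = a then 1 else 0

/-- Inner product with a simple root. -/
def ip (a : B) (v : B → ℝ) : ℝ := ∑ x, Kf M a x * v x

lemma ip_ev (a b : B) : ip M a (ev b) = Kf M a b := by
  unfold ip ev
  simp [mul_ite, Finset.sum_ite_eq']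

/-- The geometric reflection. -/
def gr (a : B) : Function.End (B → ℝ) := fun v x => v x - 2 * ip M a v * ev a x

lemma ip_gr_shape (a a₁ a₂ : B) (v : B → ℝ) (C₁ C₂ : ℝ) :
    ip M a (fun x => v x - C₁ * ev a₁ x - C₂ * ev a₂ x)
      = ip M a v - C₁ * Kf M a a₁ - C₂ * Kf M a a₂ := by
  unfold ip
  rw [← ip_ev M a a₁, ← ip_ev M a a₂]
  unfold ip
  rw [Finset.mul_sum, Finset.mul_sum, ← Finset.sum_sub_distrib, ← Finset.sum_sub_distrib]
  congr 1
  funext x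
  ring

lemma ip_gr_shape1 (a a₁ : B) (v : B → ℝ) (C₁ : ℝ) :
    ip M a (fun x => v x - C₁ * ev a₁ x) = ip M a v - C₁ * Kf M a a₁ := by
  have h := ip_gr_shape M a a₁ a₁ v C₁ 0
  simp only [zero_mul, sub_zero] at h
  exact h

lemma gr_sq (a : B) : gr M a * gr M a = 1 := by
  funext v
  show gr M a (gr M a v) = v
  unfold gr
  funext x
  have h1 : ip M a (fun x => v x - 2 * ip M a v * ev a x)
      = ip M a v - 2 * ip M a v * Kf M a a := ip_gr_shape1 M a a v _
  rw [h1, Kf_diag]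
  ring

section Pair

variable (a b : B)

/-- Abbreviation: cosine of the angle. -/
def cc : ℝ := Real.cos (Real.pi / M a b)

lemma Kf_ab : Kf M a b = -(cc M a b) := rfl

lemma Kf_ba : Kf M b a = -(cc M a b) := by rw [← Kf_symm]; rfl

/-- Transition matrix for the inner products under `gr a * gr b`. -/
def Sm : Matrix (Fin 2) (Fin 2) ℝ :=
  !![-1, -2 * cc M a b; 2 * cc M a b, 4 * (cc M a b)^2 - 1]

lemma one_step (v : B → ℝ) :
    (gr M a * gr M b) v = fun x => v x
      - (2 * ip M a v + 4 * cc M a b * ip M b v) * ev a x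
      - (2 * ip M b v) * ev b x := by
  show gr M a (gr M b v) = _
  unfold gr
  funext x
  have h1 : ip M a (fun x => v x - 2 * ip M b v * ev b x)
      = ip M a v - 2 * ip M b v * Kf M a b := ip_gr_shape1 M a b v _
  rw [h1, Kf_ab]
  ring

lemma ip_one_step (v : B → ℝ) :
    ip M a ((gr M a * gr M b) v) = ((Sm M a b).mulVec ![ip M a v, ip M b v]) 0
    ∧ ip M b ((gr M a * gr M b) v) = ((Sm M a b).mulVec ![ip M a v, ip M b v]) 1 := by
  rw [one_step]
  constructor
  · rw [ip_gr_shape M a a b v _ _, Kf_diag, Kf_ab]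
    simp [Sm, Matrix.mulVec, dotProduct, Fin.sum_univ_two]
    ring
  · rw [ip_gr_shape M b a b v _ _, Kf_diag, Kf_ba]
    simp [Sm, Matrix.mulVec, dotProduct, Fin.sum_univ_two]
    ring

lemma ip_pow (k : ℕ) (v : B → ℝ) :
    ip M a (((gr M a * gr M b) ^ k) v) = (((Sm M a b) ^ k).mulVec ![ip M a v, ip M b v]) 0
    ∧ ip M b (((gr M a * gr M b) ^ k) v) = (((Sm M a b) ^ k).mulVec ![ip M a v, ip M b v]) 1 := by
  induction k with
  | zero => simp [Function.End.one_def, Matrix.one_mulVec]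
  | succ k ih =>
    have happ : ((gr M a * gr M b) ^ (k+1)) v = (gr M a * gr M b) (((gr M a * gr M b) ^ k) v) := by
      rw [pow_succ']; rfl
    rw [happ]
    have h := ip_one_step M a b (((gr M a * gr M b) ^ k) v)
    rw [ih.1, ih.2] at h
    have hv : ![(((Sm M a b) ^ k).mulVec ![ip M a v, ip M b v]) 0,
        (((Sm M a b) ^ k).mulVec ![ip M a v, ip M b v]) 1]
        = ((Sm M a b) ^ k).mulVec ![ip M a v, ip M b v] := by
      funext idx; fin_cases idx <;> rfl
    rw [hv] at h
    rw [Matrix.mulVec_mulVec, ← pow_succ'] at h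
    exact h

lemma accum (K : ℕ) (v : B → ℝ) :
    ((gr M a * gr M b) ^ K) v = fun x => v x
      - (∑ k ∈ Finset.range K, (2 * (((Sm M a b) ^ k).mulVec ![ip M a v, ip M b v]) 0
          + 4 * cc M a b * (((Sm M a b) ^ k).mulVec ![ip M a v, ip M b v]) 1)) * ev a x
      - (∑ k ∈ Finset.range K, 2 * (((Sm M a b) ^ k).mulVec ![ip M a v, ip M b v]) 1) * ev b x := by
  induction K with
  | zero => funext x; simp [Function.End.one_def]
  | succ K ih =>
    have happ : ((gr M a * gr M b) ^ (K+1)) v = (gr M a * gr M b) (((gr M a * gr M b) ^ K) v) := by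
      rw [pow_succ']; rfl
    rw [happ, one_step]
    have hip := ip_pow M a b K v
    funext x
    rw [hip.1, hip.2]
    simp only [ih]
    rw [Finset.sum_range_succ, Finset.sum_range_succ]
    ring

/-- Chebyshev-type sequence. -/
def aseq (c : ℝ) : ℕ → ℝ
  | 0 => 0
  | 1 => 1
  | (k+2) => (4 * c^2 - 2) * aseq c (k+1) - aseq c k

lemma Sm_sq : (Sm M a b)^2 = (4 * (cc M a b)^2 - 2) • (Sm M a b) - 1 := by
  ext idx jdx
  fin_cases idx <;> fin_cases jdx <;>
    simp [pow_two, Sm, Matrix.mul_apply, Fin.sum_univ_two, Matrix.one_apply] <;> ring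

lemma Sm_pow (k : ℕ) :
    (Sm M a b) ^ (k + 1) = aseq (cc M a b) (k+1) • (Sm M a b) - (aseq (cc M a b) k) • 1 := by
  induction k with
  | zero => simp [aseq]
  | succ k ih =>
    rw [pow_succ, ih, sub_mul, smul_mul_assoc, smul_mul_assoc, one_mul, ← pow_two, Sm_sq]
    rw [show aseq (cc M a b) (k+1+1) = (4 * (cc M a b)^2 - 2) * aseq (cc M a b) (k+1)
        - aseq (cc M a b) k from rfl]
    rw [smul_sub, smul_smul, sub_smul]
    module

lemma aseq_sin (c θ : ℝ) (hc : c = Real.cos θ) (k : ℕ) :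
    aseq c k * Real.sin (2*θ) = Real.sin (2*(k:ℝ)*θ) := by
  induction k using Nat.strong_induction_on with
  | _ k ih =>
    match k with
    | 0 => simp [aseq]
    | 1 => norm_num [aseq]
    | (k+2) =>
      have ih1 := ih (k+1) (by omega)
      have ih0 := ih k (by omega)
      have hA := Real.sin_add (2*((k:ℝ)+1)*θ) (2*θ)
      have hB := Real.sin_sub (2*((k:ℝ)+1)*θ) (2*θ)
      have h2 : 2*((k:ℝ)+1)*θ + 2*θ = 2*((k:ℝ)+2)*θ := by ring
      have h3 : 2*((k:ℝ)+1)*θ - 2*θ = 2*(k:ℝ)*θ := by ring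
      rw [h2] at hA
      rw [h3] at hB
      have hcos2 : Real.cos (2*θ) = 2 * c^2 - 1 := by
        rw [Real.cos_two_mul, hc]
      have hsum : Real.sin (2*((k:ℝ)+2)*θ) + Real.sin (2*(k:ℝ)*θ)
          = 2 * Real.sin (2*((k:ℝ)+1)*θ) * Real.cos (2*θ) := by
        rw [hA, hB]; ring
      have hk2 : ((k+2 : ℕ) : ℝ) = (k:ℝ) + 2 := by push_cast; ring
      have hk1 : ((k+1 : ℕ) : ℝ) = (k:ℝ) + 1 := by push_cast; ring
      rw [show aseq c (k+2) = (4 * c^2 - 2) * aseq c (k+1) - aseq c k from rfl, hk2]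
      rw [hk1] at ih1
      rw [sub_mul, mul_assoc, ih1, ih0]
      have h4 : (4 * c^2 - 2) = 2 * Real.cos (2*θ) := by rw [hcos2]; ring
      rw [h4]
      linarith [hsum]

end Pair

section PairOrder

variable (a b : B)

lemma Sm_pow_m_eq_one (m : ℕ) (hm : M a b = m) (hm2 : 2 ≤ m) : (Sm M a b) ^ m = 1 := by
  rcases Nat.lt_or_ge m 3 with h3 | h3
  · -- m = 2
    have hm2' : m = 2 := by omega
    subst hm2'
    have hc : cc M a b = 0 := by
      unfold cc
      rw [hm]
      norm_num [Real.cos_pi_div_two]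
    ext idx jdx
    fin_cases idx <;> fin_cases jdx <;>
      simp [pow_two, Sm, hc, Matrix.mul_apply, Fin.sum_univ_two, Matrix.one_apply]
  · -- m ≥ 3
    have hmR : (0:ℝ) < (m:ℝ) := by positivity
    set θ := Real.pi / m with hθ
    have hcc : cc M a b = Real.cos θ := by unfold cc; rw [hm]
    have hθpos : 0 < θ := by rw [hθ]; positivity
    have h2θlt : 2*θ < Real.pi := by
      have hexp : 2*θ = 2*Real.pi/(m:ℝ) := by rw [hθ]; ring
      rw [hexp, div_lt_iff₀ hmR]
      have h3R : (3:ℝ) ≤ (m:ℝ) := by exact_mod_cast h3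
      nlinarith [Real.pi_pos]
    have hsin2 : Real.sin (2*θ) ≠ 0 :=
      ne_of_gt (Real.sin_pos_of_pos_of_lt_pi (by linarith) h2θlt)
    have h2pi : 2*(m:ℝ)*θ = 2*Real.pi := by
      rw [hθ]; field_simp
    have ham : aseq (cc M a b) m = 0 := by
      have h := aseq_sin (cc M a b) θ hcc m
      rw [h2pi, Real.sin_two_pi] at h
      exact (mul_eq_zero.mp h).resolve_right hsin2
    have ham1 : aseq (cc M a b) (m-1) = -1 := by
      have h := aseq_sin (cc M a b) θ hcc (m-1)
      have hcast : ((m-1 : ℕ) : ℝ) = (m:ℝ) - 1 := by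
        rw [Nat.cast_sub (by omega)]; norm_num
      rw [hcast] at h
      have harg : 2*((m:ℝ)-1)*θ = 2*Real.pi - 2*θ := by
        have : 2*((m:ℝ)-1)*θ = 2*(m:ℝ)*θ - 2*θ := by ring
        rw [this, h2pi]
      rw [harg, Real.sin_sub, Real.sin_two_pi, Real.cos_two_pi] at h
      have h' : aseq (cc M a b) (m-1) * Real.sin (2*θ) = (-1) * Real.sin (2*θ) := by
        rw [h]; ring
      exact mul_right_cancel₀ hsin2 h'
    have hm1 : m - 1 + 1 = m := by omega
    calc (Sm M a b) ^ m = (Sm M a b) ^ (m - 1 + 1) := by rw [hm1]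
      _ = aseq (cc M a b) (m-1+1) • (Sm M a b) - (aseq (cc M a b) (m-1)) • 1 := Sm_pow M a b _
      _ = 1 := by rw [hm1, ham, ham1]; simp

lemma Sm_sum_eq_zero (m : ℕ) (hm : M a b = m) (hm2 : 2 ≤ m) :
    ∑ k ∈ Finset.range m, (Sm M a b) ^ k = 0 := by
  have hgeom := geom_sum_mul (Sm M a b) m
  rw [Sm_pow_m_eq_one M a b m hm hm2, sub_self] at hgeom
  -- S - 1 is invertible
  have hmR : (0:ℝ) < (m:ℝ) := by positivity
  set θ := Real.pi / m with hθ
  have hcc : cc M a b = Real.cos θ := by unfold cc; rw [hm]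
  have hθpos : 0 < θ := by rw [hθ]; positivity
  have hθltpi : θ < Real.pi := by
    rw [hθ, div_lt_iff₀ hmR]
    have h2R : (2:ℝ) ≤ (m:ℝ) := by exact_mod_cast hm2
    nlinarith [Real.pi_pos]
  have hsinpos := Real.sin_pos_of_pos_of_lt_pi hθpos hθltpi
  have hc2 : (cc M a b)^2 < 1 := by
    rw [hcc]
    nlinarith [Real.sin_sq_add_cos_sq θ]
  have hdet : (Sm M a b - 1).det ≠ 0 := by
    have hS1 : Sm M a b - 1 = !![-2, -2 * cc M a b; 2 * cc M a b, 4 * (cc M a b)^2 - 2] := by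
      ext idx jdx
      fin_cases idx <;> fin_cases jdx <;>
        simp [Sm, Matrix.one_apply] <;> ring
    rw [hS1, Matrix.det_fin_two_of]
    nlinarith [hc2]
  have hunit : IsUnit (Sm M a b - 1) := by
    rw [Matrix.isUnit_iff_isUnit_det]
    exact isUnit_iff_ne_zero.mpr hdet
  have h0 : (0 : Matrix (Fin 2) (Fin 2) ℝ) * (Sm M a b - 1) = 0 := by rw [zero_mul]
  exact hunit.mul_right_cancel (hgeom.trans h0.symm)

lemma Sm_mulVec_cos (m : ℕ) (hm : M a b = m) (hm2 : 2 ≤ m) (k : ℕ) :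
    ((Sm M a b) ^ k).mulVec ![1, -(cc M a b)]
      = ![Real.cos (2*(k:ℝ)*(Real.pi/m)),
          -(Real.cos (2*(k:ℝ)*(Real.pi/m)) * Real.cos (Real.pi/m)
            - Real.sin (2*(k:ℝ)*(Real.pi/m)) * Real.sin (Real.pi/m))] := by
  set θ := Real.pi / m with hθ
  have hcc : cc M a b = Real.cos θ := by unfold cc; rw [hm]
  have hs : Real.sin θ ^ 2 = 1 - Real.cos θ ^ 2 := by
    nlinarith [Real.sin_sq_add_cos_sq θ]
  induction k with
  | zero =>
    funext idx
    fin_cases idx <;> simp [Matrix.one_mulVec, hcc] <;> norm_num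
  | succ k ih =>
    rw [pow_succ', ← Matrix.mulVec_mulVec, ih]
    have harg : 2*((k+1:ℕ):ℝ)*θ = 2*(k:ℝ)*θ + 2*θ := by push_cast; ring
    rw [harg, Real.cos_add, Real.sin_add, Real.cos_two_mul, Real.sin_two_mul]
    funext idx
    fin_cases idx <;>
      simp [Sm, Matrix.mulVec, dotProduct, Fin.sum_univ_two, hcc]
    · ring
    · linear_combination (-(2 * Real.cos θ * Real.cos (2*(k:ℝ)*θ))) * hs

lemma Sm_mulVec_fix (hm : M a b = 0) (k : ℕ) :
    ((Sm M a b) ^ k).mulVec ![1, -1] = ![1, -1] := by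
  have hc1 : cc M a b = 1 := by
    unfold cc
    rw [hm]
    norm_num
  induction k with
  | zero => rw [pow_zero, Matrix.one_mulVec]
  | succ k ih =>
    rw [pow_succ', ← Matrix.mulVec_mulVec, ih]
    funext idx
    fin_cases idx <;>
      simp [Sm, hc1, Matrix.mulVec, dotProduct, Fin.sum_univ_two] <;> norm_num

end PairOrder

/-- The geometric representation is liftable. -/
lemma gr_liftable : M.IsLiftable (gr M) := by
  intro a b
  by_cases hab : a = b
  · subst hab
    rw [M.diagonal a, pow_one, gr_sq]
  · by_cases hm0 : M a b = 0
    · rw [hm0, pow_zero]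
    · have hm2 : 2 ≤ M a b := by
        have := M.off_diagonal a b hab
        omega
      funext v
      show ((gr M a * gr M b) ^ (M a b)) v = v
      rw [accum M a b (M a b) v]
      have hsum : ∀ (w : Fin 2 → ℝ) (idx : Fin 2),
          ∑ k ∈ Finset.range (M a b), ((Sm M a b ^ k).mulVec w) idx = 0 := by
        intro w idx
        have heq : ∑ k ∈ Finset.range (M a b), ((Sm M a b ^ k).mulVec w) idx
            = ((∑ k ∈ Finset.range (M a b), Sm M a b ^ k).mulVec w) idx := by
          simp only [Matrix.mulVec, dotProduct]
          rw [Finset.sum_comm]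
          congr 1
          funext jdx
          rw [Matrix.sum_apply, Finset.sum_mul]
        rw [heq, Sm_sum_eq_zero M a b (M a b) rfl hm2, Matrix.zero_mulVec]
        rfl
      funext x
      have h1 : ∑ k ∈ Finset.range (M a b),
          (2 * ((Sm M a b ^ k).mulVec ![ip M a v, ip M b v]) 0
            + 4 * cc M a b * ((Sm M a b ^ k).mulVec ![ip M a v, ip M b v]) 1) = 0 := by
        rw [Finset.sum_add_distrib, ← Finset.mul_sum, ← Finset.mul_sum,
          hsum _ 0, hsum _ 1]
        ring
      have h2 : ∑ k ∈ Finset.range (M a b),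
          2 * ((Sm M a b ^ k).mulVec ![ip M a v, ip M b v]) 1 = 0 := by
        rw [← Finset.mul_sum, hsum _ 1, mul_zero]
      rw [h1, h2]
      ring

/-- Exact order: if `(s i * s j) ^ k = 1` then `M i j ∣ k`. -/
theorem order_dvd {W : Type*} [Group W] (cs : CoxeterSystem M W) (i j : B) (hij : i ≠ j)
    (k : ℕ) (h : (cs.simple i * cs.simple j) ^ k = 1) : M i j ∣ k := by
  have hφ : ((gr M i * gr M j) ^ k) = 1 := by
    have h1 : cs.lift ⟨gr M, gr_liftable M⟩ ((cs.simple i * cs.simple j) ^ k) = 1 := by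
      rw [h, map_one]
    rw [map_pow, map_mul, cs.lift_apply_simple (gr_liftable M) i,
      cs.lift_apply_simple (gr_liftable M) j] at h1
    exact h1
  have happ : ((gr M i * gr M j) ^ k) (ev i) = ev i := by rw [hφ]; rfl
  have hipa : ip M i (ev i) = 1 := by rw [ip_ev, Kf_diag]
  have hipb : ip M j (ev i) = -(cc M i j) := by rw [ip_ev, Kf_ba]
  by_cases hm0 : M i j = 0
  · -- infinite case: show k = 0
    rw [hm0]
    rw [zero_dvd_iff]
    by_contra hk
    have hc1 : cc M i j = 1 := by
      unfold cc; rw [hm0]; norm_num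
    have hacc := accum M i j k (ev i)
    rw [happ] at hacc
    have hev : ![ip M i (ev i), ip M j (ev i)] = ![(1:ℝ), -1] := by
      rw [hipa, hipb, hc1]
    rw [hev] at hacc
    have hY : ∑ l ∈ Finset.range k,
        2 * ((Sm M i j ^ l).mulVec ![(1:ℝ), -1]) 1 = -(2*k) := by
      have : ∀ l ∈ Finset.range k, 2 * ((Sm M i j ^ l).mulVec ![(1:ℝ), -1]) 1 = -2 := by
        intro l _
        rw [Sm_mulVec_fix M i j hm0 l]
        norm_num
      rw [Finset.sum_congr rfl this]
      simp
      push_cast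
      ring
    have heval := congrFun hacc j
    have hevij : ev i j = (0:ℝ) := by
      unfold ev
      rw [if_neg (fun hh => hij hh.symm)]
    have hevjj : ev j j = (1:ℝ) := by unfold ev; rw [if_pos rfl]
    rw [hY, hevij, hevjj] at heval
    have : (2*(k:ℝ)) = 0 := by linarith [heval]
    have : (k:ℝ) = 0 := by linarith
    exact hk (by exact_mod_cast this)
  · have hm2 : 2 ≤ M i j := by
      have := M.off_diagonal i j hij
      omega
    set m := M i j with hmm
    have hip := (ip_pow M i j k (ev i)).1
    have hev : ![ip M i (ev i), ip M j (ev i)] = ![(1:ℝ), -(cc M i j)] := by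
      rw [hipa, hipb]
    rw [happ, hev, Sm_mulVec_cos M i j m rfl hm2 k, hipa] at hip
    have hcos : Real.cos (2*(k:ℝ)*(Real.pi/m)) = 1 := by
      simpa using hip.symm
    obtain ⟨n, hn⟩ := (Real.cos_eq_one_iff _).mp hcos
    have hmR : (0:ℝ) < (m:ℝ) := by positivity
    have hπ : (0:ℝ) < Real.pi := Real.pi_pos
    have hnm : ((n:ℝ) * m - k) * (2*Real.pi) = 0 := by
      have h2 : 2*(k:ℝ)*(Real.pi/m) * m = 2*(k:ℝ)*Real.pi := by field_simp
      have h3 := congrArg (fun x => x * (m:ℝ)) hn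
      rw [h2] at h3
      nlinarith [h3]
    have hnm2 : (n:ℝ) * m = k := by
      rcases mul_eq_zero.mp hnm with h | h
      · linarith
      · nlinarith [hπ]
    have hnk : (k:ℤ) = (m:ℤ) * n := by
      have : ((n * m : ℤ) : ℝ) = ((k:ℤ) : ℝ) := by push_cast; linarith [hnm2]
      have h5 := Int.cast_injective this
      rw [← h5]; ring
    exact Int.natCast_dvd_natCast.mp ⟨n, hnk⟩

end Geometric

end MatsumotoAux



open CoxeterSystem List

namespace MatsumotoAux

variable {B : Type*} {W : Type*} [Group W] {M : CoxeterMatrix B} (cs : CoxeterSystem M W)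

local prefix:100 "s" => cs.simple
local prefix:100 "π" => cs.wordProd

/-- The alternating word of length `k` *starting* with `x` (then `y`, `x`, ...). -/
def myAlt (x y : B) : ℕ → List B
  | 0 => []
  | (k+1) => x :: myAlt y x k

@[simp] lemma myAlt_length (x y : B) (k : ℕ) : (myAlt x y k).length = k := by
  induction k generalizing x y with
  | zero => rfl
  | succ k ih => simp [myAlt, ih]

lemma myAlt_mem {x y c : B} {k : ℕ} (h : c ∈ myAlt x y k) : c = x ∨ c = y := by
  induction k generalizing x y with
  | zero => simp [myAlt] at h
  | succ k ih =>
    rw [myAlt] at h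
    rcases List.mem_cons.mp h with rfl | h2
    · left; rfl
    · exact (ih h2).symm

lemma myAlt_eq_alternatingWord (x y : B) (k : ℕ) :
    myAlt x y k = if Even k then alternatingWord x y k else alternatingWord y x k := by
  induction k generalizing x y with
  | zero => simp [myAlt, alternatingWord]
  | succ k ih =>
    rw [myAlt, ih y x]
    rcases Nat.even_or_odd k with he | ho
    · rw [if_pos he, if_neg (by simp [Nat.even_add_one, he])]
      rw [alternatingWord_succ' y x k, if_pos he]
    · have hne : ¬ Even k := Nat.not_even_iff_odd.mpr ho
      rw [if_neg hne, if_pos (Nat.even_add_one.mpr hne)]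
      rw [alternatingWord_succ' x y k, if_neg hne]

/-- A reduced word in two letters starting with `x` is the alternating word. -/
lemma reduced_two_letter_alt : ∀ (l : List B) (x y : B), x ≠ y →
    cs.IsReduced (x :: l) → (∀ c ∈ l, c = x ∨ c = y) →
    x :: l = myAlt x y (l.length + 1) := by
  intro l
  induction l with
  | nil => intro x y _ _ _; rfl
  | cons c t ih =>
    intro x y hxy hred hmem
    rcases hmem c (List.mem_cons_self (a := c) (l := t)) with rfl | rfl
    · exfalso
      have hprod : π (c :: c :: t) = π t := by
        rw [cs.wordProd_cons, cs.wordProd_cons, cs.simple_mul_simple_cancel_left]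
      have h1 : cs.length (π (c :: c :: t)) ≤ t.length := by
        rw [hprod]; exact cs.length_wordProd_le t
      have h2 := hred
      unfold CoxeterSystem.IsReduced at h2
      simp only [List.length_cons] at h2
      omega
    · have hredt : cs.IsReduced (c :: t) := by
        have h := CoxeterSystem.IsReduced.drop hred 1
        simpa using h
      have hmemt : ∀ d ∈ t, d = c ∨ d = x := by
        intro d hd
        rcases hmem d (List.mem_cons_of_mem c hd) with h | h
        · right; exact h
        · left; exact h
      have hres := ih c x (fun h => hxy h.symm) hredt hmemt
      show x :: c :: t = myAlt x c (t.length + 1 + 1)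
      rw [show myAlt x c (t.length + 1 + 1) = x :: myAlt c x (t.length + 1) from rfl, ← hres]

/-- If the two alternating words of length `k` have the same product, then
`(s x * s y) ^ k = 1`. -/
lemma prod_myAlt_eq_imp (x y : B) (k : ℕ)
    (h : π (myAlt x y k) = π (myAlt y x k)) : (s x * s y) ^ k = 1 := by
  rcases Nat.even_or_odd k with he | ho
  · obtain ⟨t, rfl⟩ := he
    have ht2 : (t + t) / 2 = t := by omega
    have he' : Even (t + t) := ⟨t, rfl⟩
    rw [myAlt_eq_alternatingWord, myAlt_eq_alternatingWord, if_pos he', if_pos he',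
      cs.prod_alternatingWord_eq_mul_pow, cs.prod_alternatingWord_eq_mul_pow,
      if_pos he', if_pos he', ht2, one_mul, one_mul] at h
    -- h : (s x * s y) ^ t = (s y * s x) ^ t
    have h2 : (s x * s y) ^ t = ((s x * s y)⁻¹) ^ t := by
      rw [h]; congr 1; rw [inv_simple_mul cs x y]
    rw [pow_add]
    nth_rewrite 2 [h2]
    rw [inv_pow, mul_inv_cancel]
  · obtain ⟨t, rfl⟩ := ho
    have hne : ¬ Even (2*t+1) := by simp [Nat.even_add_one, parity_simps]
    have ht2 : (2*t+1) / 2 = t := by omega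
    rw [myAlt_eq_alternatingWord, myAlt_eq_alternatingWord, if_neg hne, if_neg hne,
      cs.prod_alternatingWord_eq_mul_pow, cs.prod_alternatingWord_eq_mul_pow,
      if_neg hne, if_neg hne, ht2] at h
    -- h : s x * (s y * s x) ^ t = s y * (s x * s y) ^ t
    rw [show (s y * s x) = (s x * s y)⁻¹ from (inv_simple_mul cs x y).symm] at h
    have hE : ((s x * s y)⁻¹) ^ t = (s x * s y) ^ (t+1) := by
      have h3 := congrArg (fun z => s x * z) h
      rw [cs.simple_mul_simple_cancel_left, ← mul_assoc, ← pow_succ'] at h3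
      exact h3
    have : (s x * s y) ^ (2*t+1) = (s x * s y) ^ (t+1) * (s x * s y) ^ t := by
      rw [← pow_add]; congr 1; omega
    rw [this, ← hE, inv_pow, inv_mul_cancel]

lemma my_eraseIdx_append_lt {α : Type*} (l₁ l₂ : List α) (d : ℕ) (h : d < l₁.length) :
    (l₁ ++ l₂).eraseIdx d = l₁.eraseIdx d ++ l₂ := by
  induction l₁ generalizing d with
  | nil => simp at h
  | cons a l₁ ih =>
    cases d with
    | zero => rfl
    | succ d =>
      simp only [List.cons_append, List.eraseIdx_cons_succ, List.cons_append]
      rw [ih d (by simpa using Nat.lt_of_succ_lt_succ h)]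

lemma my_eraseIdx_append_ge {α : Type*} (l₁ l₂ : List α) (d : ℕ) (h : l₁.length ≤ d) :
    (l₁ ++ l₂).eraseIdx d = l₁ ++ l₂.eraseIdx (d - l₁.length) := by
  induction l₁ generalizing d with
  | nil => simp
  | cons a l₁ ih =>
    cases d with
    | zero => simp at h
    | succ d =>
      simp only [List.cons_append, List.eraseIdx_cons_succ]
      rw [ih d (by simpa using Nat.le_of_succ_le_succ h)]
      simp [Nat.succ_sub_succ]

/-- Extension step: given a reduced word for `w` with prefix `myAlt y x k`, and a left
descent `x` of `w`, we can find a reduced word for `w` with prefix `myAlt x y (k+1)`,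
provided `k < M x y` or `M x y = 0`. Uses the exchange property. -/
lemma alt_step [Fintype B] (w : W) (x y : B) (hxy : x ≠ y) (hx : cs.IsLeftDescent w x) (k : ℕ)
    (hk : M x y = 0 ∨ k < M.M x y) (u : List B)
    (hred : cs.IsReduced (myAlt y x k ++ u)) (hprod : π (myAlt y x k ++ u) = w) :
    ∃ u₂, cs.IsReduced (myAlt x y (k+1) ++ u₂) ∧ π (myAlt x y (k+1) ++ u₂) = w := by
  have hx' : cs.IsLeftDescent (π (myAlt y x k ++ u)) x := by rw [hprod]; exact hx
  obtain ⟨d, hd, hde⟩ := left_exchange cs hx'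
  by_cases hdk : d < k
  · exfalso
    rw [my_eraseIdx_append_lt _ _ _ (by rw [myAlt_length]; exact hdk)] at hde
    rw [cs.wordProd_append, cs.wordProd_append, ← mul_assoc] at hde
    have hkey : s x * π (myAlt y x k) = π ((myAlt y x k).eraseIdx d) :=
      mul_right_cancel hde
    set l' := (myAlt y x k).eraseIdx d with hl'
    have hdlen : d < (myAlt y x k).length := by rw [myAlt_length]; exact hdk
    have hlen' : l'.length + 1 = k := by
      have := List.length_eraseIdx_add_one hdlen
      rw [myAlt_length] at this
      exact this
    have hprod' : π (x :: l') = π (myAlt y x k) := by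
      rw [cs.wordProd_cons, ← hkey, cs.simple_mul_simple_cancel_left]
    have hredMyAlt : cs.IsReduced (myAlt y x k) := by
      have h := CoxeterSystem.IsReduced.take hred k
      rwa [List.take_left' (myAlt_length y x k)] at h
    have hlred : cs.IsReduced (x :: l') := by
      unfold CoxeterSystem.IsReduced
      rw [hprod']
      have := hredMyAlt
      unfold CoxeterSystem.IsReduced at this
      rw [this, myAlt_length]
      simp only [List.length_cons]
      omega
    have hmem' : ∀ c ∈ l', c = x ∨ c = y := by
      intro c hc
      have hsub : c ∈ myAlt y x k := (List.eraseIdx_sublist _ d).subset hc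
      exact (myAlt_mem hsub).symm
    have halt := reduced_two_letter_alt cs l' x y hxy hlred hmem'
    have hkk : π (myAlt x y k) = π (myAlt y x k) := by
      rw [show myAlt x y k = x :: l' from by rw [halt, hlen'], hprod']
    have hpow := prod_myAlt_eq_imp cs x y k hkk
    have hdvd := order_dvd M cs x y hxy k hpow
    rcases hk with h0 | hlt
    · rw [h0, zero_dvd_iff] at hdvd
      omega
    · have := Nat.le_of_dvd (by omega) hdvd
      omega
  · push_neg at hdk
    rw [my_eraseIdx_append_ge _ _ _ (by rw [myAlt_length]; exact hdk), myAlt_length] at hde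
    refine ⟨u.eraseIdx (d - k), ?_, ?_⟩
    · -- reduced: the length is right
      have hprod2 : π (myAlt x y (k+1) ++ u.eraseIdx (d-k)) = w := by
        rw [show myAlt x y (k+1) ++ u.eraseIdx (d-k) = x :: (myAlt y x k ++ u.eraseIdx (d-k))
          from rfl]
        rw [cs.wordProd_cons, ← hde, ← mul_assoc, cs.simple_mul_simple_self, one_mul, hprod]
      unfold CoxeterSystem.IsReduced
      rw [hprod2]
      have hlenw : cs.length w = k + u.length := by
        have := hred
        unfold CoxeterSystem.IsReduced at this
        rw [hprod] at this
        rw [this]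
        simp [myAlt_length]
      have hdu : d - k < u.length := by
        rw [List.length_append, myAlt_length] at hd
        omega
      have := List.length_eraseIdx_add_one hdu
      simp only [List.length_append, myAlt_length, List.length_cons]
      omega
    · rw [show myAlt x y (k+1) ++ u.eraseIdx (d-k) = x :: (myAlt y x k ++ u.eraseIdx (d-k))
        from rfl]
      rw [cs.wordProd_cons, ← hde, ← mul_assoc, cs.simple_mul_simple_self, one_mul, hprod]

/-- If `i ≠ j` are both left descents of `w`, then `M i j` is finite and `w` has a reduced
word starting with the braid word. -/
lemma braid_prefix [Fintype B] (w : W) (i j : B) (hij : i ≠ j)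
    (hi : cs.IsLeftDescent w i) (hj : cs.IsLeftDescent w j) :
    M i j ≠ 0 ∧ ∃ u, cs.IsReduced (braidWord M i j ++ u) ∧ π (braidWord M i j ++ u) = w := by
  classical
  set P : ℕ → Prop := fun k =>
    (∃ u, cs.IsReduced (myAlt i j k ++ u) ∧ π (myAlt i j k ++ u) = w)
    ∧ (∃ u', cs.IsReduced (myAlt j i k ++ u') ∧ π (myAlt j i k ++ u') = w) with hP
  have base : P 0 := by
    obtain ⟨ω, hω, hωw⟩ := cs.exists_reduced_word' w
    exact ⟨⟨ω, by simpa [myAlt] using ⟨hω, hωw.symm⟩⟩, ⟨ω, by simpa [myAlt] using ⟨hω, hωw.symm⟩⟩⟩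
  have step : ∀ k, (M i j = 0 ∨ k < M i j) → P k → P (k+1) := by
    intro k hk ⟨⟨u, hu, hpu⟩, ⟨u', hu', hpu'⟩⟩
    constructor
    · exact alt_step cs w i j hij hi k hk u' hu' hpu'
    · refine alt_step cs w j i hij.symm hj k ?_ u hu hpu
      rwa [M.symmetric j i]
  have bound : ∀ k, P k → k ≤ cs.length w := by
    intro k hPk
    obtain ⟨⟨u, hu, hpu⟩, _⟩ := hPk
    have := hu
    unfold CoxeterSystem.IsReduced at this
    rw [hpu] at this
    rw [this]
    simp [myAlt_length]
  have hM0 : M i j ≠ 0 := by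
    intro h0
    have hall : ∀ k, P k := by
      intro k
      induction k with
      | zero => exact base
      | succ k ih => exact step k (Or.inl h0) ih
    have := bound (cs.length w + 1) (hall _)
    omega
  refine ⟨hM0, ?_⟩
  have hup : ∀ k, k ≤ M i j → P k := by
    intro k
    induction k with
    | zero => intro _; exact base
    | succ k ih =>
      intro hk
      exact step k (Or.inr (by omega)) (ih (by omega))
  have hPm := hup (M i j) le_rfl
  rcases Nat.even_or_odd (M i j) with he | ho
  · obtain ⟨⟨u, hu, hpu⟩, _⟩ := hPm
    refine ⟨u, ?_, ?_⟩
    · rwa [show braidWord M i j = myAlt i j (M i j) from by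
        rw [myAlt_eq_alternatingWord, if_pos he]]
    · rwa [show braidWord M i j = myAlt i j (M i j) from by
        rw [myAlt_eq_alternatingWord, if_pos he]]
  · obtain ⟨_, ⟨u, hu, hpu⟩⟩ := hPm
    have hne : ¬ Even (M i j) := Nat.not_even_iff_odd.mpr ho
    refine ⟨u, ?_, ?_⟩
    · rwa [show braidWord M i j = myAlt j i (M i j) from by
        rw [myAlt_eq_alternatingWord, if_neg hne]]
    · rwa [show braidWord M i j = myAlt j i (M i j) from by
        rw [myAlt_eq_alternatingWord, if_neg hne]]

end MatsumotoAux

open CoxeterSystem List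

namespace MatsumotoAux

variable {B : Type*} {W : Type*} [Group W] {M : CoxeterMatrix B} (cs : CoxeterSystem M W)

local prefix:100 "s" => cs.simple
local prefix:100 "π" => cs.wordProd

/-- Product of braid generators along a word. -/
def bmap (M : CoxeterMatrix B) (l : List B) : BraidGroup M := (l.map (braidGen M)).prod

lemma bmap_cons (i : B) (l : List B) : bmap M (i :: l) = braidGen M i * bmap M l := by
  simp [bmap]

lemma bmap_append (l₁ l₂ : List B) : bmap M (l₁ ++ l₂) = bmap M l₁ * bmap M l₂ := by
  simp [bmap]

lemma bmap_eq_mk (l : List B) :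
    bmap M l = PresentedGroup.mk (braidRelsSet M) ((l.map FreeGroup.of).prod) := by
  induction l with
  | nil => simp [bmap]
  | cons i l ih =>
    rw [bmap_cons, ih, List.map_cons, List.prod_cons, map_mul]
    rfl

lemma bmap_braidWord (i j : B) : bmap M (braidWord M i j) = bmap M (braidWord M j i) := by
  rw [bmap_eq_mk, bmap_eq_mk]
  rw [← mul_inv_eq_one, ← map_inv, ← map_mul]
  have hmem : ((braidWord M i j).map FreeGroup.of).prod
      * (((braidWord M j i).map FreeGroup.of).prod)⁻¹ ∈ braidRelsSet M := by
    unfold braidRelsSet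
    exact Set.mem_iUnion.2 ⟨i, Set.mem_iUnion.2 ⟨j, rfl⟩⟩
  exact (QuotientGroup.eq_one_iff _).mpr (Subgroup.subset_normalClosure hmem)

lemma key_induction [Finite B] : ∀ (n : ℕ) (l₁ l₂ : List B), l₁.length = n → l₂.length = n →
    cs.IsReduced l₁ → cs.IsReduced l₂ → π l₁ = π l₂ → bmap M l₁ = bmap M l₂ := by
  have : Fintype B := Fintype.ofFinite B
  intro n
  induction n using Nat.strong_induction_on with
  | _ n ih =>
    -- same-head step
    have hstep : ∀ (x : B) (t t' : List B), t.length + 1 = n → t'.length + 1 = n →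
        cs.IsReduced (x :: t) → cs.IsReduced (x :: t') → π (x :: t) = π (x :: t') →
        bmap M (x :: t) = bmap M (x :: t') := by
      intro x t t' ht ht' hrt hrt' hpt
      have hrt2 : cs.IsReduced t := by have := CoxeterSystem.IsReduced.drop hrt 1; simpa using this
      have hrt2' : cs.IsReduced t' := by have := CoxeterSystem.IsReduced.drop hrt' 1; simpa using this
      have hpt2 : π t = π t' := by
        rw [cs.wordProd_cons, cs.wordProd_cons] at hpt
        exact mul_left_cancel hpt
      rw [bmap_cons, bmap_cons, ih (n-1) (by omega) t t' (by omega) (by omega) hrt2 hrt2' hpt2]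
    intro l₁ l₂ h1 h2 hr1 hr2 hp
    cases l₁ with
    | nil =>
      cases l₂ with
      | nil => rfl
      | cons j t₂ => simp at h1 h2; omega
    | cons i t₁ =>
      cases l₂ with
      | nil => simp at h1 h2; omega
      | cons j t₂ =>
        simp only [List.length_cons] at h1 h2
        by_cases hij : i = j
        · subst hij
          exact hstep i t₁ t₂ h1 h2 hr1 hr2 hp
        · -- both descents
          set w := π (i :: t₁) with hw
          have hlenw : cs.length w = n := by
            have := hr1
            unfold CoxeterSystem.IsReduced at this
            rw [← hw] at this
            simp only [List.length_cons] at this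
            omega
          have hi : cs.IsLeftDescent w i := by
            unfold CoxeterSystem.IsLeftDescent
            have hsw : s i * w = π t₁ := by
              rw [hw, cs.wordProd_cons, cs.simple_mul_simple_cancel_left]
            rw [hsw, hlenw]
            have := cs.length_wordProd_le t₁
            omega
          have hj : cs.IsLeftDescent w j := by
            unfold CoxeterSystem.IsLeftDescent
            have hsw : s j * w = π t₂ := by
              rw [hp, cs.wordProd_cons, cs.simple_mul_simple_cancel_left]
            rw [hsw, hlenw]
            have := cs.length_wordProd_le t₂
            omega
          obtain ⟨hM0, u, hbred, hbprod⟩ := braid_prefix cs w i j hij hi hj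
          have hc2prod : π (braidWord M j i ++ u) = w := by
            rw [cs.wordProd_append, cs.wordProd_braidWord_eq, ← cs.wordProd_append, hbprod]
          have hlenc1 : (braidWord M i j ++ u).length = n := by
            have := hbred
            unfold CoxeterSystem.IsReduced at this
            rw [hbprod, hlenw] at this
            omega
          have hlenc2 : (braidWord M j i ++ u).length = n := by
            simp only [List.length_append, length_alternatingWord] at hlenc1 ⊢
            rw [M.symmetric j i]
            exact hlenc1
          have hc2red : cs.IsReduced (braidWord M j i ++ u) := by
            unfold CoxeterSystem.IsReduced
            rw [hc2prod, hlenw, hlenc2]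
          -- decompose the braid words as cons
          have hm1 : M i j - 1 + 1 = M i j := Nat.succ_pred_eq_of_ne_zero hM0
          have hd1 : braidWord M i j
              = (if Even (M i j - 1) then j else i) :: alternatingWord i j (M i j - 1) := by
            show alternatingWord i j (M i j) = _
            rw [← hm1, alternatingWord_succ' i j (M i j - 1), hm1]
          have hd2 : braidWord M j i
              = (if Even (M i j - 1) then i else j) :: alternatingWord j i (M i j - 1) := by
            show alternatingWord j i (M j i) = _
            rw [M.symmetric j i, ← hm1, alternatingWord_succ' j i (M i j - 1), hm1]
          have hbraid : bmap M (braidWord M i j ++ u) = bmap M (braidWord M j i ++ u) := by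
            rw [bmap_append, bmap_append, bmap_braidWord]
          have hulen1 : (M i j - 1) + u.length + 1 = n := by
            simp only [List.length_append, length_alternatingWord] at hlenc1
            omega
          have hulen2 : (M i j - 1) + u.length + 1 = n := hulen1
          have estep : ∀ (x : B) (t : List B) (bw rest : List B),
              t.length + 1 = n → bw = x :: rest → rest.length + u.length + 1 = n →
              cs.IsReduced (x :: t) → cs.IsReduced (bw ++ u) → π (bw ++ u) = w →
              π (x :: t) = w →
              bmap M (x :: t) = bmap M (bw ++ u) := by
            intro x t bw rest ht hbw hrlen hrt hredbw hprodbw hprodt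
            have hcons : bw ++ u = x :: (rest ++ u) := by rw [hbw, List.cons_append]
            rw [hcons]
            refine hstep x t _ ht ?_ hrt ?_ ?_
            · rw [List.length_append]
              have : rest.length + u.length + 1 = n := hrlen
              omega
            · rw [← hcons]; exact hredbw
            · rw [← hcons, hprodt, hprodbw]
          rcases Nat.even_or_odd (M i j - 1) with he | ho
          · -- braidWord M i j starts with j, braidWord M j i starts with i
            rw [if_pos he] at hd1
            rw [if_pos he] at hd2
            have e1 := estep i t₁ (braidWord M j i) (alternatingWord j i (M i j - 1))
              h1 hd2 (by rw [length_alternatingWord]; exact hulen2) hr1 hc2red hc2prod hw.symm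
            have e2 := estep j t₂ (braidWord M i j) (alternatingWord i j (M i j - 1))
              h2 hd1 (by rw [length_alternatingWord]; exact hulen1) hr2 hbred hbprod hp.symm
            rw [e1, e2, ← hbraid]
          · have hne : ¬ Even (M i j - 1) := Nat.not_even_iff_odd.mpr ho
            rw [if_neg hne] at hd1
            rw [if_neg hne] at hd2
            have e1 := estep i t₁ (braidWord M i j) (alternatingWord i j (M i j - 1))
              h1 hd1 (by rw [length_alternatingWord]; exact hulen1) hr1 hbred hbprod hw.symm
            have e2 := estep j t₂ (braidWord M j i) (alternatingWord j i (M i j - 1))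
              h2 hd2 (by rw [length_alternatingWord]; exact hulen2) hr2 hc2red hc2prod hp.symm
            rw [e1, e2, hbraid]

end MatsumotoAux

theorem stmt_0 {B W : Type*} [Finite B] [Group W] (M : CoxeterMatrix B)
    (cs : CoxeterSystem M W) (w : W) (l₁ l₂ : List B)
    (h₁ : cs.wordProd l₁ = w) (h₂ : cs.wordProd l₂ = w)
    (hr₁ : cs.IsReduced l₁) (hr₂ : cs.IsReduced l₂) :
    (l₁.map (braidGen M)).prod = (l₂.map (braidGen M)).prod := by
  have hlen : l₂.length = l₁.length := by
    have a1 := hr₁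
    have a2 := hr₂
    unfold CoxeterSystem.IsReduced at a1 a2
    rw [h₁] at a1
    rw [h₂] at a2
    omega
  exact MatsumotoAux.key_induction cs l₁.length l₁ l₂ rfl hlen hr₁ hr₂ (by rw [h₁, h₂])

end MatsumotoProof
end

section
/- Let H be the Hecke algebra over R (the completion of ℚ[v^{±1}] at (v−1)) of the rank-one Coxeter group W = {1, s}, with generator T_s satisfying (T_s − v)(T_s + v⁻¹) = 0. Then the unique element a ∈ RH with a² = 1 and a ≡ s mod (v−1) (i.e. a specializes to s at v = 1 under the isomorphism H/(v−1) ≅ ℚW) is a = (1−v²)/(1+v²) + (2v/(1+v²)) T_s. -/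
/-!
Let `H` be the Hecke algebra, over `R` = completion of `ℚ[v^{±1}]` at `(v - 1)`, of the
rank-one Coxeter group `W = {1, s}`: a free `R`-algebra with basis `{1, T_s}` and
`T_s² = (v - v⁻¹) T_s + 1`. Then the unique element `a` with `a² = 1` that specializes
to `s` at `v = 1` (i.e. `a ≡ T_s mod (v - 1)`) is
`a = (1 - v²)/(1 + v²) + (2v/(1 + v²)) T_s`.
-/

/-- The Laurent polynomial ring `ℚ[v^{±1}]`. -/
abbrev Lau : Type := LaurentPolynomial ℚ

/-- The completion `R` of `ℚ[v^{±1}]` at the ideal `(v - 1)`. -/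
abbrev Rv : Type :=
  AdicCompletion (Ideal.span {(LaurentPolynomial.T 1 : Lau) - 1}) Lau

/-- The element `v` of `R`. -/
noncomputable def vR : Rv := algebraMap Lau Rv (LaurentPolynomial.T 1)

/-- The element `v⁻¹` of `R`. -/
noncomputable def vRinv : Rv := algebraMap Lau Rv (LaurentPolynomial.T (-1))

section Aux

variable {R : Type*} [CommRing R] (I : Ideal R)

/-- An element of an adic completion all of whose components are units is a unit. -/
lemma aux_isUnit_of_isUnit_val (x : AdicCompletion I R) (h : ∀ n, IsUnit (x.val n)) :
    IsUnit x := by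
  have key : ∀ {m n : ℕ} (hmn : m ≤ n),
      AdicCompletion.transitionMap I R hmn (↑(h n).unit⁻¹ : R ⧸ (I ^ n • ⊤ : Ideal R)) =
        (↑(h m).unit⁻¹ : R ⧸ (I ^ m • ⊤ : Ideal R)) := by
    intro m n hmn
    have h1 : x.val n * ↑(h n).unit⁻¹ = 1 := (h n).mul_val_inv
    have h2 : x.val m * ↑(h m).unit⁻¹ = 1 := (h m).mul_val_inv
    have h3 := congrArg (AdicCompletion.transitionMapₐ I hmn) h1
    rw [map_mul, map_one] at h3
    have h4 : (AdicCompletion.transitionMapₐ I hmn) (x.val n) = x.val m := x.property hmn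
    rw [h4] at h3
    -- h3 : x.val m * transitionMapₐ (inv) = 1
    calc AdicCompletion.transitionMap I R hmn (↑(h n).unit⁻¹)
        = (↑(h m).unit⁻¹ * x.val m) * AdicCompletion.transitionMapₐ I hmn (↑(h n).unit⁻¹) := by
          rw [mul_comm (↑(h m).unit⁻¹ : R ⧸ (I ^ m • ⊤ : Ideal R)), h2, one_mul]; rfl
      _ = ↑(h m).unit⁻¹ * (x.val m * AdicCompletion.transitionMapₐ I hmn (↑(h n).unit⁻¹)) := by
          ring
      _ = ↑(h m).unit⁻¹ := by rw [h3, mul_one]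
  refine IsUnit.of_mul_eq_one (a := x) ⟨fun n => ↑(h n).unit⁻¹, fun {m n} hmn => key hmn⟩ ?_
  ext n
  exact (h n).mul_val_inv

end Aux

lemma vR_isUnit_one_add_mul (t : Rv) : IsUnit (1 + (vR - 1) * t) := by
  apply aux_isUnit_of_isUnit_val
  intro n
  set I : Ideal Lau := Ideal.span {(LaurentPolynomial.T 1 : Lau) - 1}
  have hval : (1 + (vR - 1) * t).val n =
      1 + (Ideal.Quotient.mk (I ^ n • ⊤ : Ideal Lau) ((LaurentPolynomial.T 1 : Lau) - 1)) *
        t.val n := by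
    rfl
  rw [hval]
  have hnil : IsNilpotent
      ((Ideal.Quotient.mk (I ^ n • ⊤ : Ideal Lau) ((LaurentPolynomial.T 1 : Lau) - 1))) := by
    refine ⟨n, ?_⟩
    rw [← map_pow]
    refine Ideal.Quotient.eq_zero_iff_mem.mpr ?_
    have h1 : ((LaurentPolynomial.T 1 : Lau) - 1) ∈ I := Ideal.subset_span rfl
    have h2 : ((LaurentPolynomial.T 1 : Lau) - 1) ^ n ∈ I ^ n := Ideal.pow_mem_pow h1 n
    have h3 : (I ^ n • ⊤ : Ideal Lau) = I ^ n := by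
      ext x; simp
    rw [h3]
    exact h2
  exact ((Commute.all _ _).isNilpotent_mul_right hnil).isUnit_one_add

lemma vR_isUnit_add (c t : Rv) (hc : IsUnit c) : IsUnit (c + (vR - 1) * t) := by
  obtain ⟨u, rfl⟩ := hc
  have : (u : Rv) + (vR - 1) * t = u * (1 + (vR - 1) * ((↑u⁻¹ : Rv) * t)) := by
    have hu : (u : Rv) * ↑u⁻¹ = 1 := u.mul_inv
    linear_combination -(vR - 1) * t * hu
  rw [this]
  exact (Units.isUnit u).mul (vR_isUnit_one_add_mul _)

lemma vR_mul_vRinv : vR * vRinv = 1 := by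
  unfold vR vRinv
  rw [← map_mul, ← LaurentPolynomial.T_add]
  norm_num [LaurentPolynomial.T_zero, map_one]

lemma two_isUnit_Rv : IsUnit (2 : Rv) := by
  have h1 : (2 : Rv) = algebraMap Lau Rv (algebraMap ℚ Lau (2 : ℚ)) := by
    rw [map_ofNat, map_ofNat]
  rw [h1]
  exact ((isUnit_iff_ne_zero.mpr (by norm_num : (2:ℚ) ≠ 0)).map _).map _

set_option maxHeartbeats 2000000 in
theorem stmt_9 {A : Type*} [Ring A] [Algebra Rv A] (Ts : A)
    (bas : Module.Basis (Fin 2) Rv A) (hb0 : bas 0 = 1) (hb1 : bas 1 = Ts)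
    (hquad : Ts ^ 2 = (vR - vRinv) • Ts + 1)
    (a : A) (ha : a ^ 2 = 1)
    (hsp : ∃ y : A, a - Ts = algebraMap Rv A (vR - 1) * y) :
    a = algebraMap Rv A ((1 - vR ^ 2) * Ring.inverse (1 + vR ^ 2)) +
        algebraMap Rv A (2 * vR * Ring.inverse (1 + vR ^ 2)) * Ts := by
  -- extraction lemma from the basis
  have ext2 : ∀ x0 x1 y0 y1 : Rv, x0 • (1 : A) + x1 • Ts = y0 • 1 + y1 • Ts →
      x0 = y0 ∧ x1 = y1 := by
    intro x0 x1 y0 y1 h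
    rw [← hb0, ← hb1] at h
    have h0 := congrArg (fun z => (bas.repr z) 0) h
    have h1 := congrArg (fun z => (bas.repr z) 1) h
    simp [Module.Basis.repr_self, Finsupp.single_apply] at h0 h1
    exact ⟨h0, h1⟩
  set c0 : Rv := bas.repr a 0 with hc0def
  set c1 : Rv := bas.repr a 1 with hc1def
  have ha' : a = c0 • (1 : A) + c1 • Ts := by
    conv_lhs => rw [← bas.sum_repr a]
    rw [Fin.sum_univ_two, hb0, hb1]
  have hTs2 : Ts * Ts = (vR - vRinv) • Ts + 1 := by rw [← pow_two]; exact hquad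
  -- the equation a^2 = 1 in coordinates
  have hexp : (c0 * c0 + c1 * c1) • (1 : A) + (c0 * c1 + c1 * c0 + c1 * c1 * (vR - vRinv)) • Ts =
      (1 : Rv) • (1 : A) + (0 : Rv) • Ts := by
    have : a * a = (1 : A) := by rw [← pow_two]; simpa using ha
    rw [ha'] at this
    calc (c0 * c0 + c1 * c1) • (1 : A) + (c0 * c1 + c1 * c0 + c1 * c1 * (vR - vRinv)) • Ts
        = (c0 • (1 : A) + c1 • Ts) * (c0 • (1 : A) + c1 • Ts) := by
          simp only [mul_add, add_mul, Algebra.mul_smul_comm, Algebra.smul_mul_assoc,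
            one_mul, mul_one, hTs2, smul_add, smul_smul]
          module
      _ = (1 : A) := this
      _ = (1 : Rv) • (1 : A) + (0 : Rv) • Ts := by simp
  obtain ⟨E0, E1⟩ := ext2 _ _ _ _ hexp
  -- the specialization condition in coordinates
  obtain ⟨y, hy⟩ := hsp
  set d0 : Rv := bas.repr y 0 with hd0def
  set d1 : Rv := bas.repr y 1 with hd1def
  have hy' : y = d0 • (1 : A) + d1 • Ts := by
    conv_lhs => rw [← bas.sum_repr y]
    rw [Fin.sum_univ_two, hb0, hb1]
  have hspc : c0 • (1 : A) + (c1 - 1) • Ts = ((vR - 1) * d0) • (1 : A) + ((vR - 1) * d1) • Ts := by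
    calc c0 • (1 : A) + (c1 - 1) • Ts
        = (c0 • (1 : A) + c1 • Ts) - Ts := by module
      _ = a - Ts := by rw [← ha']
      _ = algebraMap Rv A (vR - 1) * y := hy
      _ = (vR - 1) • y := by rw [Algebra.smul_def]
      _ = ((vR - 1) * d0) • (1 : A) + ((vR - 1) * d1) • Ts := by
          rw [hy', smul_add, smul_smul, smul_smul]
  obtain ⟨hc0sp, hc1sp⟩ := ext2 _ _ _ _ hspc
  have hc1 : c1 = 1 + (vR - 1) * d1 := by linear_combination hc1sp
  -- now pure computation in Rv
  have hvv : vR * vRinv = 1 := vR_mul_vRinv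
  have uc1 : IsUnit c1 := by rw [hc1]; exact vR_isUnit_one_add_mul d1
  have E1' : 2 * c0 + c1 * (vR - vRinv) = 0 := by
    have h : c1 * (2 * c0 + c1 * (vR - vRinv)) = 0 := by linear_combination E1
    exact (uc1.mul_right_eq_zero).mp h
  -- (c1 (v + v⁻¹))² = 4
  have hsq : (c1 * (vR + vRinv)) ^ 2 = 2 ^ 2 := by
    linear_combination (c1 * (vR - vRinv) - 2 * c0) * E1' + 4 * c1 ^ 2 * hvv + 4 * E0
  have hu2 : IsUnit (c1 * (vR + vRinv) + 2) := by
    have heq : c1 * (vR + vRinv) + 2 =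
        4 + (vR - 1) * ((1 - vRinv) + d1 * (vR + vRinv)) := by
      linear_combination (vR + vRinv) * hc1 + hvv
    rw [heq]
    refine vR_isUnit_add _ _ ?_
    have : (4 : Rv) = 2 * 2 := by norm_num
    rw [this]
    exact two_isUnit_Rv.mul two_isUnit_Rv
  have hu : c1 * (vR + vRinv) = 2 := by
    have hfac : (c1 * (vR + vRinv) - 2) * (c1 * (vR + vRinv) + 2) = 0 := by
      linear_combination hsq
    have := (IsUnit.mul_left_eq_zero hu2).mp hfac
    linear_combination this
  -- invertibility of 1 + v²
  have hvunit : IsUnit vR := IsUnit.of_mul_eq_one vRinv hvv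
  have hvpv : IsUnit (vR + vRinv) := by
    have heq : vR + vRinv = 2 + (vR - 1) * (1 - vRinv) := by
      linear_combination hvv
    rw [heq]
    exact vR_isUnit_add _ _ two_isUnit_Rv
  have huv : IsUnit (1 + vR ^ 2) := by
    have heq : 1 + vR ^ 2 = vR * (vR + vRinv) := by
      linear_combination -hvv
    rw [heq]
    exact hvunit.mul hvpv
  set q : Rv := Ring.inverse (1 + vR ^ 2) with hq
  have hqinv : (1 + vR ^ 2) * q = 1 := Ring.mul_inverse_cancel _ huv
  -- final values of the coordinates
  have hc1v : c1 * (1 + vR ^ 2) = 2 * vR := by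
    linear_combination vR * hu - c1 * hvv
  have hc1fin : c1 = 2 * vR * q := by
    linear_combination q * hc1v - c1 * hqinv
  have hc0v : c0 * (1 + vR ^ 2) = 1 - vR ^ 2 := by
    have h2 : 2 * (c0 * (1 + vR ^ 2) - (1 - vR ^ 2)) = 0 := by
      linear_combination (1 + vR ^ 2) * E1' + (2 * vR * vRinv - 1 - vR ^ 2) * hu + (4 - 2 * c1 * vRinv) * hvv
    have := (two_isUnit_Rv.mul_right_eq_zero).mp h2
    linear_combination this
  have hc0fin : c0 = (1 - vR ^ 2) * q := by
    linear_combination q * hc0v - c0 * hqinv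
  rw [ha', hc0fin, hc1fin, Algebra.smul_def, Algebra.smul_def, mul_one]
end

section
/- Let W be a finite Coxeter group with longest element w₀, and H_W its Hecke algebra over R, the completion of ℚ[v^{±1}] at (v−1). Assume the center Z(RH_W) is isomorphic as an R-algebra to Rⁿ for some n. Then there is at most one element w̃₀ ∈ RH_W satisfying: (i) w̃₀² = 1; (ii) w̃₀ specializes to w₀ at v = 1; (iii) w̃₀ T_s w̃₀⁻¹ = T_{w₀sw₀} for all s ∈ S. -/
noncomputable abbrev Iv : Ideal Lau := Ideal.span {(LaurentPolynomial.T 1 : Lau) - 1}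

lemma tau_ne_zero : ((LaurentPolynomial.T 1 : Lau) - 1) ≠ 0 := by
  rw [sub_ne_zero]
  intro h
  have h2 : (LaurentPolynomial.T 1 : Lau) = LaurentPolynomial.T 0 := by
    rw [LaurentPolynomial.T_zero]; exact h
  have := congrArg LaurentPolynomial.degree h2
  rw [LaurentPolynomial.degree_T, LaurentPolynomial.degree_T] at this
  simp at this

lemma algebraMap_tau : algebraMap Lau Rv ((LaurentPolynomial.T 1 : Lau) - 1) = vR - 1 := by
  rw [map_sub, map_one]; rfl

lemma smul_top_lau (m : ℕ) : (Iv ^ m • ⊤ : Submodule Lau Lau) = (Iv ^ m : Ideal Lau) := by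
  rw [smul_eq_mul, Ideal.mul_top]

lemma vR_reg {x : Rv} (h : (vR - 1) * x = 0) : x = 0 := by
  set τ : Lau := (LaurentPolynomial.T 1 : Lau) - 1 with hτ
  have hsm : τ • x = 0 := by
    rw [Algebra.smul_def, algebraMap_tau]; exact h
  ext n
  rw [AdicCompletion.val_zero_apply]
  obtain ⟨ξ, hξ⟩ := Submodule.Quotient.mk_surjective _ (x.val (n+1))
  have h1 : τ • (x.val (n+1)) = 0 := by
    rw [← AdicCompletion.val_smul_apply, hsm, AdicCompletion.val_zero_apply]
  rw [← hξ, ← Submodule.Quotient.mk_smul, Submodule.Quotient.mk_eq_zero] at h1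
  rw [smul_top_lau] at h1
  have h2 : τ • ξ ∈ Ideal.span {τ ^ (n+1)} := by rwa [← Ideal.span_singleton_pow]
  obtain ⟨c, hc⟩ := Ideal.mem_span_singleton'.mp h2
  have hcan : τ * (c * τ ^ n) = τ * ξ := by
    rw [smul_eq_mul] at hc
    rw [← hc]; ring
  have hξn : ξ = c * τ ^ n := (mul_left_cancel₀ tau_ne_zero hcan).symm
  have h3 : x.val n = Submodule.Quotient.mk ξ := by
    rw [← x.property (Nat.le_succ n), ← hξ]
    rfl
  rw [h3, Submodule.Quotient.mk_eq_zero, smul_top_lau, Ideal.span_singleton_pow,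
    Ideal.mem_span_singleton']
  exact ⟨c, hξn.symm⟩

lemma mul_mem_smul {m k : ℕ} {p q : Rv} (hp : p ∈ (Iv ^ m • ⊤ : Submodule Lau Rv))
    (hq : q ∈ (Iv ^ k • ⊤ : Submodule Lau Rv)) :
    p * q ∈ (Iv ^ (m + k) • ⊤ : Submodule Lau Rv) := by
  refine Submodule.smul_induction_on hp ?_ ?_
  · intro r hr x _
    refine Submodule.smul_induction_on hq ?_ ?_
    · intro s hs y _
      rw [smul_mul_smul_comm]
      exact Submodule.smul_mem_smul (by rw [pow_add]; exact Ideal.mul_mem_mul hr hs)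
        Submodule.mem_top
    · intro u v hu hv
      rw [mul_add]
      exact add_mem hu hv
  · intro u v hu hv
    rw [add_mul]
    exact add_mem hu hv

lemma mem_smul_top_zero (x : Rv) : x ∈ (Iv ^ 0 • ⊤ : Submodule Lau Rv) := by
  rw [pow_zero, Ideal.one_eq_top, Submodule.top_smul]
  exact Submodule.mem_top

lemma sqrt_one_Rv {u d : Rv} (h1 : u * u = 1) (h2 : u - 1 = (vR - 1) * d) : u = 1 := by
  set w : Rv := u - 1 with hw
  have hquad : w * w + 2 * w = 0 := by
    calc w * w + 2 * w = u * u - 1 := by rw [hw]; ring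
    _ = 0 := by rw [h1]; ring
  have h2e : (2 : Rv) * (algebraMap Lau Rv (LaurentPolynomial.C (2⁻¹ : ℚ))) = 1 := by
    have hL : (2 : Lau) * LaurentPolynomial.C (2⁻¹ : ℚ) = 1 := by
      rw [show (2 : Lau) = LaurentPolynomial.C (2 : ℚ) from (map_ofNat _ 2).symm, ← map_mul]
      norm_num
    calc (2 : Rv) * (algebraMap Lau Rv (LaurentPolynomial.C (2⁻¹ : ℚ)))
        = algebraMap Lau Rv ((2 : Lau) * LaurentPolynomial.C (2⁻¹ : ℚ)) := by
          rw [map_mul, map_ofNat]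
    _ = 1 := by rw [hL, map_one]
  set e : Rv := -(algebraMap Lau Rv (LaurentPolynomial.C (2⁻¹ : ℚ))) with he
  have key : w = (e * w) * w := by
    have h2e' : (2 : Rv) * (-e) = 1 := by rw [he, neg_neg]; exact h2e
    linear_combination (-e) * hquad - w * h2e'
  have hbase : w ∈ (Iv ^ 1 • ⊤ : Submodule Lau Rv) := by
    rw [pow_one]
    have hwd : w = ((LaurentPolynomial.T 1 : Lau) - 1) • d := by
      rw [Algebra.smul_def, algebraMap_tau]; exact h2
    rw [hwd]
    exact Submodule.smul_mem_smul (Ideal.mem_span_singleton_self _) Submodule.mem_top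
  have hall : ∀ n, w ∈ (Iv ^ n • ⊤ : Submodule Lau Rv) := by
    intro n
    induction n with
    | zero => exact mem_smul_top_zero w
    | succ n ih =>
      have hew : e * w ∈ (Iv ^ 1 • ⊤ : Submodule Lau Rv) := by
        have := mul_mem_smul (mem_smul_top_zero e) hbase
        rwa [zero_add] at this
      have hfin := mul_mem_smul hew ih
      rw [key]
      rwa [show 1 + n = n + 1 from by omega] at hfin
  have hw0 : w = 0 :=
    (inferInstance : IsHausdorff Iv Rv).haus w (fun n => SModEq.zero.mpr (hall n))
  rw [hw] at hw0
  exact sub_eq_zero.mp hw0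

theorem stmt_11 {B W : Type*} [Group W] [Finite W] {M : CoxeterMatrix B}
    (cs : CoxeterSystem M W)
    (w0 : W) (hw0 : ∀ u : W, cs.length u ≤ cs.length w0)
    -- the Hecke algebra `R H_W`: free `R`-module with basis `(T_w)_{w ∈ W}`
    {A : Type*} [Ring A] [Algebra Rv A] (T : W → A)
    (bas : Module.Basis W Rv A) (hbas : ∀ w, bas w = T w) (hT1 : T 1 = 1)
    (hTmul : ∀ (i : B) (w : W), cs.length (cs.simple i * w) = cs.length w + 1 →
      T (cs.simple i * w) = T (cs.simple i) * T w)
    (hquad : ∀ i : B,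
      (T (cs.simple i) - algebraMap Rv A vR) * (T (cs.simple i) + algebraMap Rv A vRinv) = 0)
    -- the center of `R H_W` is isomorphic to `Rⁿ`
    (n : ℕ) (hZ : Nonempty ((Subalgebra.center Rv A) ≃ₐ[Rv] (Fin n → Rv))) :
    ∀ a b : A,
      (a ^ 2 = 1 ∧ (∃ y, a - T w0 = algebraMap Rv A (vR - 1) * y) ∧
        ∀ i : B, a * T (cs.simple i) * a = T (w0 * cs.simple i * w0)) →
      (b ^ 2 = 1 ∧ (∃ y, b - T w0 = algebraMap Rv A (vR - 1) * y) ∧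
        ∀ i : B, b * T (cs.simple i) * b = T (w0 * cs.simple i * w0)) →
      a = b := by
  obtain ⟨φ⟩ := hZ
  rintro a b ⟨ha2, ⟨ya, hya⟩, ha3⟩ ⟨hb2, ⟨yb, hyb⟩, hb3⟩
  have haa : a * a = 1 := by rw [← pow_two]; exact ha2
  have hbb : b * b = 1 := by rw [← pow_two]; exact hb2
  set z : A := b * a with hz
  -- z commutes with the generators
  have comm_s : ∀ i : B, z * T (cs.simple i) = T (cs.simple i) * z := by
    intro i
    have h := (ha3 i).trans (hb3 i).symm
    calc z * T (cs.simple i) = b * (a * T (cs.simple i) * a) * a := by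
          simp [hz, mul_assoc, haa]
    _ = b * (b * T (cs.simple i) * b) * a := by rw [h]
    _ = T (cs.simple i) * z := by
          simp [hz, ← mul_assoc, hbb]
  -- z commutes with all T w
  have comm_T : ∀ (k : ℕ) (w : W), cs.length w ≤ k → z * T w = T w * z := by
    intro k
    induction k with
    | zero =>
      intro w hw
      have hw1 : w = 1 := cs.length_eq_zero_iff.mp (Nat.le_zero.mp hw)
      rw [hw1, hT1, mul_one, one_mul]
    | succ k ih =>
      intro w hw
      rcases eq_or_ne w 1 with rfl | hne
      · rw [hT1, mul_one, one_mul]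
      · obtain ⟨i, hi⟩ := cs.exists_leftDescent_of_ne_one hne
        set u : W := cs.simple i * w with hu
        have hsu : cs.simple i * u = w := by
          rw [hu, ← mul_assoc, cs.simple_mul_simple_self, one_mul]
        have hlt : cs.length u < cs.length w := hi
        have hle : cs.length w ≤ 1 + cs.length u := by
          calc cs.length w = cs.length (cs.simple i * u) := by rw [hsu]
          _ ≤ cs.length (cs.simple i) + cs.length u := cs.length_mul_le _ _
          _ = 1 + cs.length u := by rw [cs.length_simple]
        have hlen2 : cs.length (cs.simple i * u) = cs.length u + 1 := by
          rw [hsu]; omega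
        have hT : T w = T (cs.simple i) * T u := by
          rw [← hsu]; exact hTmul i u hlen2
        have h2 := ih u (by omega)
        rw [hT, ← mul_assoc, comm_s i, mul_assoc, h2, ← mul_assoc]
  -- z is central
  have comm_all : ∀ x : A, z * x = x * z := by
    have heq : LinearMap.mulLeft Rv z = LinearMap.mulRight Rv z := by
      apply bas.ext
      intro w
      rw [hbas]
      exact comm_T (cs.length w) w le_rfl
    intro x
    have := DFunLike.congr_fun heq x
    simpa using this
  -- a and b commute
  have hba : b = a * b * a := by
    have h := comm_all a
    rw [hz] at h
    calc b = b * (a * a) := by rw [haa, mul_one]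
    _ = b * a * a := by rw [mul_assoc]
    _ = a * (b * a) := h
    _ = a * b * a := by rw [mul_assoc]
  have hab : a * b = b * a := by
    calc a * b = a * b * (a * a) := by rw [haa, mul_one]
    _ = (a * b * a) * a := by noncomm_ring
    _ = b * a := by rw [← hba]
  -- z squares to one
  have hzz : z * z = 1 := by
    calc z * z = b * (a * b) * a := by rw [hz]; noncomm_ring
    _ = b * (b * a) * a := by rw [hab]
    _ = (b * b) * (a * a) := by noncomm_ring
    _ = 1 := by rw [haa, hbb, mul_one]
  -- z - 1 is divisible by (v - 1), with central cofactor
  set c : A := (yb - ya) * a with hc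
  have hzc : z - 1 = algebraMap Rv A (vR - 1) * c := by
    calc z - 1 = (b - a) * a := by rw [hz, ← haa]; noncomm_ring
    _ = ((b - T w0) - (a - T w0)) * a := by noncomm_ring
    _ = (algebraMap Rv A (vR - 1) * yb - algebraMap Rv A (vR - 1) * ya) * a := by
          rw [hya, hyb]
    _ = algebraMap Rv A (vR - 1) * c := by rw [hc]; noncomm_ring
  -- regularity of (v-1) on A
  have regA : ∀ m : A, algebraMap Rv A (vR - 1) * m = 0 → m = 0 := by
    intro m hm
    rw [← Algebra.smul_def] at hm
    have h0 : (vR - 1) • bas.repr m = 0 := by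
      rw [← map_smul, hm, map_zero]
    have h1 : bas.repr m = 0 := by
      apply Finsupp.ext
      intro w
      have := DFunLike.congr_fun h0 w
      rw [Finsupp.smul_apply, smul_eq_mul, Finsupp.zero_apply] at this
      exact vR_reg this
    have := congrArg bas.repr.symm h1
    rw [LinearEquiv.symm_apply_apply, map_zero] at this
    exact this
  have ccentral : ∀ x : A, c * x = x * c := by
    intro x
    have h1 : algebraMap Rv A (vR - 1) * (c * x - x * c) = 0 := by
      have hcx : algebraMap Rv A (vR - 1) * c * x = x * (algebraMap Rv A (vR - 1) * c) := by
        have h' : (z - 1) * x = x * (z - 1) := by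
          rw [sub_mul, mul_sub, comm_all x, mul_one, one_mul]
        rw [hzc] at h'
        exact h'
      have hax := Algebra.commutes (vR - 1) x
      have h2 : algebraMap Rv A (vR - 1) * (x * c) = x * (algebraMap Rv A (vR - 1) * c) := by
        rw [← mul_assoc, hax, mul_assoc]
      rw [mul_sub, h2, ← hcx, hc]; noncomm_ring
    have := regA _ h1
    exact sub_eq_zero.mp this
  -- pass to the center
  set zc : Subalgebra.center Rv A := ⟨z, Subalgebra.mem_center_iff.mpr
    (fun x => (comm_all x).symm)⟩ with hzcdef
  set cc : Subalgebra.center Rv A := ⟨c, Subalgebra.mem_center_iff.mpr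
    (fun x => (ccentral x).symm)⟩ with hccdef
  have hZsq : zc * zc = 1 := Subtype.ext hzz
  have hZsub : zc - 1 = (vR - 1) • cc := by
    apply Subtype.ext
    show z - 1 = (vR - 1) • c
    rw [Algebra.smul_def]
    exact hzc
  have hφsq : φ zc * φ zc = 1 := by rw [← map_mul, hZsq, map_one]
  have hφsub : φ zc - 1 = (vR - 1) • φ cc := by
    rw [← map_smul, ← hZsub, map_sub, map_one]
  have hcomp : ∀ i : Fin n, φ zc i = 1 := by
    intro i
    apply sqrt_one_Rv (d := φ cc i)
    · have := congrFun hφsq i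
      rw [Pi.mul_apply, Pi.one_apply] at this
      exact this
    · have := congrFun hφsub i
      rw [Pi.sub_apply, Pi.one_apply, Pi.smul_apply, smul_eq_mul] at this
      exact this
  have hζ : φ zc = 1 := funext (fun i => by rw [hcomp i, Pi.one_apply])
  have hzc1 : zc = 1 := φ.injective (by rw [hζ, map_one])
  have hz1 : z = 1 := congrArg Subtype.val hzc1
  have hba1 : b * a = 1 := by rw [← hz]; exact hz1
  have : b = a := by
    calc b = b * (a * a) := by rw [haa, mul_one]
    _ = (b * a) * a := by rw [mul_assoc]
    _ = a := by rw [hba1, one_mul]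
  exact this.symm
end

section
/- Let W = I₂(m) be the dihedral Coxeter group of order 2m (m ≥ 3), with S = {s₁, s₂}. Then the cactus group C_W is generated by γ_{s₁}, γ_{s₂}, γ_S subject only to the relations γ_{s_i}² = γ_S² = 1 and γ_S γ_{s_i} γ_S = γ_{s_{3−i}} if m is odd, γ_S γ_{s_i} γ_S = γ_{s_i} if m is even. In particular, C_{I₂(m)} is isomorphic to (ℤ/2 * ℤ/2) × ℤ/2 when m is even, and to (ℤ/2 * ℤ/2) ⋊ ℤ/2 (with ℤ/2 swapping the two free factors) when m is odd. -/
/-!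
Let `W = I₂(m)` be the dihedral Coxeter group of order `2m` (`m ≥ 3`), with
`S = {s₁, s₂}`. The cactus group `C_W` is generated by `γ_{s₁}, γ_{s₂}, γ_S` subject
only to the relations `γ_{s_i}² = γ_S² = 1` and `γ_S γ_{s_i} γ_S = γ_{s_{3-i}}` if `m`
is odd, `γ_S γ_{s_i} γ_S = γ_{s_i}` if `m` is even. In particular `C_{I₂(m)}` is
isomorphic to `(ℤ/2 * ℤ/2) × ℤ/2` when `m` is even, and to `(ℤ/2 * ℤ/2) ⋊ ℤ/2` (with
`ℤ/2` swapping the two free factors) when `m` is odd.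
-/

open CoxeterSystem Monoid

variable {B W : Type*} [DecidableEq B] [Group W] {M : CoxeterMatrix B}

/-- The standard parabolic subgroup `W_I`. -/
def parabolic (cs : CoxeterSystem M W) (I : Finset B) : Subgroup W :=
  Subgroup.closure (cs.simple '' (I : Set B))

/-- A subset `I ⊆ S` is spherical if `W_I` is finite. -/
def IsSpherical (cs : CoxeterSystem M W) (I : Finset B) : Prop :=
  Finite (parabolic cs I)

/-- The spherical subsets of `S`; these index the generators of the cactus group. -/
def Sph (cs : CoxeterSystem M W) : Type _ := {I : Finset B // IsSpherical cs I}

open scoped Classical in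
/-- The longest element `w_I` of the finite standard parabolic subgroup `W_I`. -/
noncomputable def longest (cs : CoxeterSystem M W) (I : Finset B) : W :=
  if h : ∃ w ∈ parabolic cs I, ∀ u ∈ parabolic cs I, cs.length u ≤ cs.length w then
    h.choose
  else 1

/-- The defining relations of the cactus group `C_W`. -/
noncomputable def cactusRels (M : CoxeterMatrix B) (cs : CoxeterSystem M W) :
    Set (FreeGroup (Sph cs)) :=
  {r | (∃ I : Sph cs, r = .of I * .of I) ∨
    (∃ I J U : Sph cs, Disjoint (I.1 : Finset B) J.1 ∧
      (∀ i ∈ I.1, ∀ j ∈ J.1, M i j = 2) ∧ U.1 = I.1 ∪ J.1 ∧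
      r = .of I * .of J * (.of U)⁻¹) ∨
    (∃ I J K : Sph cs, I.1 ⊆ J.1 ∧
      (cs.simple '' (K.1 : Set B)) =
        (fun w => longest cs J.1 * w * (longest cs J.1)⁻¹) '' (cs.simple '' (I.1 : Set B)) ∧
      r = .of I * .of J * (.of K)⁻¹ * (.of J)⁻¹)}

/-- The cactus group `C_W` of the Coxeter system `(W, S)`. -/
noncomputable abbrev CactusGroup (M : CoxeterMatrix B) (cs : CoxeterSystem M W) : Type _ :=
  PresentedGroup (cactusRels M cs)

/-- The Coxeter matrix of the dihedral group `I₂(m)`. -/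
def I2 (m : ℕ) (hm : 3 ≤ m) : CoxeterMatrix (Fin 2) where
  M := Matrix.of fun i j => if i = j then 1 else m
  isSymm := by
    ext i j
    simp only [Matrix.transpose_apply, Matrix.of_apply]
    by_cases h : i = j <;> simp [h, eq_comm]
  diagonal i := by simp
  off_diagonal i j h := by simp [h]; omega

/-- The explicit relations for the cactus group of `I₂(m)`: generators
`0 ↦ γ_{s₁}`, `1 ↦ γ_{s₂}`, `2 ↦ γ_S`; relations `γ_{s_i}² = γ_S² = 1` and
`γ_S γ_{s_i} γ_S = γ_{s_{3-i}}` (`m` odd), `γ_S γ_{s_i} γ_S = γ_{s_i}` (`m` even). -/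
def dihedralCactusRels (m : ℕ) : Set (FreeGroup (Fin 3)) :=
  {.of 0 * .of 0, .of 1 * .of 1, .of 2 * .of 2,
    .of 2 * .of 0 * .of 2 * (.of (if Even m then 0 else 1))⁻¹,
    .of 2 * .of 1 * .of 2 * (.of (if Even m then 1 else 0))⁻¹}

/-- The group `ℤ/2`. -/
abbrev C2 : Type := Multiplicative (ZMod 2)

namespace Stmt18

open DihedralGroup

variable {m : ℕ} {hm : 3 ≤ m}

lemma I2_apply_same (i : Fin 2) : (I2 m hm).M i i = 1 := by simp [I2]

lemma I2_apply_ne {i j : Fin 2} (h : i ≠ j) : (I2 m hm).M i j = m := by simp [I2, h]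

lemma r_pow (k : ZMod m) (n : ℕ) : (DihedralGroup.r k) ^ n = DihedralGroup.r ((n : ZMod m) * k) := by
  induction n with
  | zero => rw [pow_zero, Nat.cast_zero, zero_mul, one_def]
  | succ n ih =>
      rw [pow_succ, ih, r_mul_r, Nat.cast_add, Nat.cast_one, add_mul, one_mul]

variable (cs : CoxeterSystem (I2 m hm) (I2 m hm).Group)

noncomputable def psi : (I2 m hm).Group →* DihedralGroup m :=
  cs.lift ⟨fun i => DihedralGroup.sr ((i.val : ℕ) : ZMod m), by
    intro i j
    by_cases h : i = j
    · subst h; rw [I2_apply_same, pow_one, sr_mul_sr, sub_self, one_def]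
    · rw [I2_apply_ne h, sr_mul_sr, r_pow, ZMod.natCast_self, zero_mul]
      exact one_def.symm⟩

@[simp] lemma psi_simple (i : Fin 2) :
    psi cs (cs.simple i) = DihedralGroup.sr ((i.val : ℕ) : ZMod m) := by
  unfold psi
  exact cs.lift_apply_simple _ i

noncomputable def sec : DihedralGroup m → (I2 m hm).Group
  | .r k => (cs.simple 0 * cs.simple 1) ^ k.val
  | .sr k => cs.simple 0 * (cs.simple 0 * cs.simple 1) ^ k.val

lemma T_pow_m : (cs.simple 0 * cs.simple 1) ^ m = 1 := by
  have := cs.simple_mul_simple_pow 0 1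
  rwa [I2_apply_ne (by decide)] at this

lemma T_pow_mod (a : ℕ) : (cs.simple 0 * cs.simple 1) ^ (a % m) =
    (cs.simple 0 * cs.simple 1) ^ a := by
  conv_rhs => rw [← Nat.div_add_mod a m]
  rw [pow_add, pow_mul, T_pow_m, one_pow, one_mul]

lemma sec_sr_mul (i : Fin 2) (x : DihedralGroup m) :
    sec cs (DihedralGroup.sr ((i.val : ℕ) : ZMod m) * x) = cs.simple i * sec cs x := by
  have hm' : 3 ≤ m := hm
  haveI : NeZero m := ⟨by omega⟩
  haveI : Fact (1 < m) := ⟨by omega⟩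
  fin_cases i
  · cases x with
    | r k =>
      show sec cs (DihedralGroup.sr ((0:ℕ) : ZMod m) * DihedralGroup.r k)
          = cs.simple 0 * sec cs (DihedralGroup.r k)
      rw [Nat.cast_zero, sr_mul_r, zero_add]
      rfl
    | sr k =>
      show sec cs (DihedralGroup.sr ((0:ℕ) : ZMod m) * DihedralGroup.sr k)
          = cs.simple 0 * sec cs (DihedralGroup.sr k)
      rw [Nat.cast_zero, sr_mul_sr, sub_zero]
      show (cs.simple 0 * cs.simple 1) ^ k.val
          = cs.simple 0 * (cs.simple 0 * (cs.simple 0 * cs.simple 1) ^ k.val)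
      rw [← mul_assoc]; simp
  · cases x with
    | r k =>
      show sec cs (DihedralGroup.sr ((1:ℕ) : ZMod m) * DihedralGroup.r k)
          = cs.simple 1 * sec cs (DihedralGroup.r k)
      rw [Nat.cast_one, sr_mul_r]
      show cs.simple 0 * (cs.simple 0 * cs.simple 1) ^ (((1 : ZMod m) + k).val)
          = cs.simple 1 * (cs.simple 0 * cs.simple 1) ^ k.val
      rw [ZMod.val_add, ZMod.val_one, T_pow_mod, pow_add, pow_one, ← mul_assoc, ← mul_assoc]
      simp
    | sr k =>
      show sec cs (DihedralGroup.sr ((1:ℕ) : ZMod m) * DihedralGroup.sr k)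
          = cs.simple 1 * sec cs (DihedralGroup.sr k)
      rw [Nat.cast_one, sr_mul_sr]
      show (cs.simple 0 * cs.simple 1) ^ ((k - 1).val)
          = cs.simple 1 * (cs.simple 0 * (cs.simple 0 * cs.simple 1) ^ k.val)
      set T := cs.simple 0 * cs.simple 1 with hT
      have h1 : ((-1 : ZMod m)).val = m - 1 := by
        rw [ZMod.neg_val]
        rw [if_neg (by
          intro h
          have := congrArg ZMod.val h
          rw [ZMod.val_one, ZMod.val_zero] at this
          omega), ZMod.val_one]
      have h2 : (k - 1).val = (k.val + (m - 1)) % m := by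
        rw [sub_eq_add_neg, ZMod.val_add, h1]
      have h3 : cs.simple 1 * cs.simple 0 = T⁻¹ := by
        rw [hT]; rw [mul_inv_rev]; simp
      rw [h2, T_pow_mod, ← mul_assoc, h3]
      have h4 : T ^ (k.val + (m-1)) * T = T ^ k.val := by
        rw [← pow_succ]
        have h5 : k.val + (m - 1) + 1 = k.val + m := by omega
        rw [h5, pow_add, T_pow_m, mul_one]
      calc T ^ (k.val + (m-1)) = T⁻¹ * (T ^ (k.val + (m-1)) * T) := by group
      _ = T⁻¹ * T ^ k.val := by rw [h4]

lemma sec_psi (w : (I2 m hm).Group) : sec cs (psi cs w) = w := by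
  haveI : NeZero m := ⟨by have : 3 ≤ m := hm; omega⟩
  induction w using cs.simple_induction_left with
  | one =>
    rw [map_one, one_def]
    show (cs.simple 0 * cs.simple 1) ^ (0 : ZMod m).val = 1
    rw [ZMod.val_zero, pow_zero]
  | mul_simple_left w i ih => rw [map_mul, psi_simple, sec_sr_mul, ih]

lemma psi_sec (x : DihedralGroup m) : psi cs (sec cs x) = x := by
  haveI : NeZero m := ⟨by have : 3 ≤ m := hm; omega⟩
  have h01 : psi cs (cs.simple 0 * cs.simple 1) = DihedralGroup.r 1 := by
    rw [map_mul, psi_simple, psi_simple]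
    show DihedralGroup.sr ((0:ℕ) : ZMod m) * DihedralGroup.sr ((1:ℕ):ZMod m) = _
    rw [sr_mul_sr]
    norm_num
  cases x with
  | r k =>
    show psi cs ((cs.simple 0 * cs.simple 1) ^ k.val) = _
    rw [map_pow, h01, r_pow, mul_one, ZMod.natCast_zmod_val]
  | sr k =>
    show psi cs (cs.simple 0 * (cs.simple 0 * cs.simple 1) ^ k.val) = _
    rw [map_mul, map_pow, h01, psi_simple, r_pow, mul_one]
    show DihedralGroup.sr ((0:ℕ) : ZMod m) * _ = _
    rw [Nat.cast_zero, sr_mul_r, zero_add, ZMod.natCast_zmod_val]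

lemma psi_injective : Function.Injective (psi cs) :=
  Function.LeftInverse.injective (sec_psi cs)

include cs in
lemma finiteW : Finite ((I2 m hm).Group) := by
  haveI : NeZero m := ⟨by have : 3 ≤ m := hm; omega⟩
  exact Finite.of_injective _ (psi_injective cs)


/-- Expected length of a rotation with `k.val = v`. -/
def nf (m v : ℕ) : ℕ := min (2 * v) (2 * (m - v))

/-- Expected length of a reflection `sr k` with `k.val = v`. -/
def ng (m v : ℕ) : ℕ :=
  2 * min (if v = 0 then 0 else m - v) (if v = 0 then m - 1 else v - 1) + 1

/-- The length function transported to the dihedral group. -/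
def NL (m : ℕ) : DihedralGroup m → ℕ
  | .r k => nf m k.val
  | .sr k => ng m k.val

lemma mod2m {a : ℕ} (h3 : 3 ≤ m) (h : a < 2 * m) :
    a % m = if a < m then a else a - m := by
  split_ifs with h'
  · exact Nat.mod_eq_of_lt h'
  · rw [Nat.mod_eq_sub_mod (by omega)]
    exact Nat.mod_eq_of_lt (by omega)

lemma val_j_sub {j : ℕ} (hj : j < m) [NeZero m] (k : ZMod m) :
    ((j : ZMod m) - k).val = (j + (if k.val = 0 then 0 else m - k.val)) % m := by
  rw [sub_eq_add_neg, ZMod.val_add, ZMod.neg_val, ZMod.val_cast_of_lt hj]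
  congr 1
  congr 1
  simp [ZMod.val_eq_zero]

include hm in
lemma NL_mul_sr_le (x : DihedralGroup m) (j : ℕ) (hj : j ≤ 1) :
    NL m (x * DihedralGroup.sr ((j : ℕ) : ZMod m)) ≤ NL m x + 1 := by
  haveI : NeZero m := ⟨by omega⟩
  have hjm : j < m := by omega
  cases x with
  | r k =>
    rw [r_mul_sr]
    have hv : k.val < m := ZMod.val_lt k
    show ng m (((j : ZMod m) - k).val) ≤ nf m k.val + 1
    rw [val_j_sub hjm, mod2m hm (by split_ifs <;> omega)]
    unfold ng nf
    split_ifs <;> omega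
  | sr k =>
    rw [sr_mul_sr]
    have hv : k.val < m := ZMod.val_lt k
    show nf m (((j : ZMod m) - k).val) ≤ ng m k.val + 1
    rw [val_j_sub hjm, mod2m hm (by split_ifs <;> omega)]
    unfold ng nf
    split_ifs <;> omega

variable (cs : CoxeterSystem (I2 m hm) (I2 m hm).Group)

include hm in
lemma NL_psi_le (w : (I2 m hm).Group) : NL m (psi cs w) ≤ cs.length w := by
  haveI : NeZero m := ⟨by omega⟩
  generalize hn : cs.length w = n
  induction n using Nat.strong_induction_on generalizing w with
  | _ n ih =>
    by_cases hw : w = 1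
    · subst hw
      rw [map_one]
      show NL m (DihedralGroup.r 0) ≤ n
      show nf m (0 : ZMod m).val ≤ n
      rw [ZMod.val_zero]
      unfold nf
      omega
    · obtain ⟨i, hi⟩ := cs.exists_rightDescent_of_ne_one hw
      have hlt : cs.length (w * cs.simple i) < cs.length w := hi
      have hid : w = (w * cs.simple i) * cs.simple i := by simp
      have h1 : NL m (psi cs (w * cs.simple i)) ≤ cs.length (w * cs.simple i) :=
        ih (cs.length (w * cs.simple i)) (by omega) _ rfl
      calc NL m (psi cs w)
          = NL m (psi cs (w * cs.simple i) * DihedralGroup.sr ((i.val : ℕ) : ZMod m)) := by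
            conv_lhs => rw [hid]
            rw [map_mul, psi_simple]
        _ ≤ NL m (psi cs (w * cs.simple i)) + 1 :=
            NL_mul_sr_le (hm := hm) _ i.val (by omega)
        _ ≤ n := by omega

lemma length_T_pow_le (a : ℕ) :
    cs.length ((cs.simple 0 * cs.simple 1) ^ a) ≤ 2 * a := by
  induction a with
  | zero => simp
  | succ a ih =>
    rw [pow_succ]
    calc cs.length ((cs.simple 0 * cs.simple 1) ^ a * (cs.simple 0 * cs.simple 1))
        ≤ cs.length ((cs.simple 0 * cs.simple 1) ^ a)
          + cs.length (cs.simple 0 * cs.simple 1) := cs.length_mul_le _ _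
      _ ≤ 2 * a + (cs.length (cs.simple 0) + cs.length (cs.simple 1)) := by
          have := cs.length_mul_le (cs.simple 0) (cs.simple 1)
          omega
      _ ≤ 2 * (a + 1) := by rw [cs.length_simple, cs.length_simple]; omega

include hm in
lemma length_sec_le (x : DihedralGroup m) : cs.length (sec cs x) ≤ NL m x := by
  haveI : NeZero m := ⟨by omega⟩
  set T := cs.simple 0 * cs.simple 1 with hT
  cases x with
  | r k =>
    have hv : k.val < m := ZMod.val_lt k
    show cs.length (T ^ k.val) ≤ nf m k.val
    have b1 : cs.length (T ^ k.val) ≤ 2 * k.val := length_T_pow_le cs k.val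
    have b2 : cs.length (T ^ k.val) ≤ 2 * (m - k.val) := by
      have hmul : T ^ (m - k.val) * T ^ k.val = 1 := by
        rw [← pow_add]
        have : m - k.val + k.val = m := by omega
        rw [this]
        exact T_pow_m cs
      have : T ^ k.val = (T ^ (m - k.val))⁻¹ := (inv_eq_of_mul_eq_one_right hmul).symm
      rw [this, cs.length_inv]
      exact length_T_pow_le cs _
    exact le_min b1 b2
  | sr k =>
    have hv : k.val < m := ZMod.val_lt k
    show cs.length (cs.simple 0 * T ^ k.val) ≤ ng m k.val
    set A := if k.val = 0 then 0 else m - k.val with hA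
    set Bv := if k.val = 0 then m - 1 else k.val - 1 with hB
    have hTA : T ^ k.val * T ^ A = 1 := by
      rw [← pow_add, hA]
      split_ifs with h
      · rw [h]; simp
      · have : k.val + (m - k.val) = m := by omega
        rw [this]; exact T_pow_m cs
    have hTB : T ^ (Bv + 1) = T ^ k.val := by
      rw [hB]
      split_ifs with h
      · have : m - 1 + 1 = m := by omega
        rw [this, h, pow_zero]; exact T_pow_m cs
      · congr 1; omega
    have key1 : cs.simple 0 * T ^ k.val = T ^ A * cs.simple 0 := by
      have conj1 : cs.simple 0 * T * (cs.simple 0)⁻¹ = T⁻¹ := by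
        rw [hT, cs.inv_simple, mul_inv_rev, cs.inv_simple, cs.inv_simple]
        simp [mul_assoc]
      have conj2 : cs.simple 0 * T ^ k.val * (cs.simple 0)⁻¹ = T ^ A := by
        have : cs.simple 0 * T ^ k.val * (cs.simple 0)⁻¹
            = (cs.simple 0 * T * (cs.simple 0)⁻¹) ^ k.val := by
          rw [conj_pow]
        rw [this, conj1, inv_pow]
        exact inv_eq_of_mul_eq_one_right hTA
      calc cs.simple 0 * T ^ k.val
          = cs.simple 0 * T ^ k.val * (cs.simple 0)⁻¹ * cs.simple 0 := by group
        _ = T ^ A * cs.simple 0 := by rw [conj2]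
    have key2 : cs.simple 0 * T ^ k.val = cs.simple 1 * T ^ Bv := by
      have h1 : cs.simple 1 * (cs.simple 0 * T ^ k.val) = T ^ Bv := by
        rw [← mul_assoc]
        have : cs.simple 1 * cs.simple 0 = T⁻¹ := by
          rw [hT, mul_inv_rev, cs.inv_simple, cs.inv_simple]
        rw [this, ← hTB, pow_succ]
        group
      calc cs.simple 0 * T ^ k.val
          = cs.simple 1 * (cs.simple 1 * (cs.simple 0 * T ^ k.val)) := by
            rw [cs.simple_mul_simple_cancel_left]
        _ = cs.simple 1 * T ^ Bv := by rw [h1]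
    have b1 : cs.length (cs.simple 0 * T ^ k.val) ≤ 2 * A + 1 := by
      rw [key1]
      have h1 := cs.length_mul_le (T ^ A) (cs.simple 0)
      have h2 := length_T_pow_le cs A
      rw [← hT] at h2
      rw [cs.length_simple] at h1
      omega
    have b2 : cs.length (cs.simple 0 * T ^ k.val) ≤ 2 * Bv + 1 := by
      rw [key2]
      have h1 := cs.length_mul_le (cs.simple 1) (T ^ Bv)
      have h2 := length_T_pow_le cs Bv
      rw [← hT] at h2
      rw [cs.length_simple] at h1
      omega
    unfold ng
    omega

include hm in
lemma length_le_NL (w : (I2 m hm).Group) : cs.length w ≤ NL m (psi cs w) := by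
  conv_lhs => rw [← sec_psi cs w]
  exact length_sec_le cs (psi cs w)

/-- The image of the longest element in the dihedral group. -/
def x0 (m : ℕ) : DihedralGroup m :=
  if Even m then .r ((m / 2 : ℕ) : ZMod m) else .sr (((m + 1) / 2 : ℕ) : ZMod m)

include hm in
lemma NL_le_m (x : DihedralGroup m) : NL m x ≤ m := by
  haveI : NeZero m := ⟨by omega⟩
  cases x with
  | r k =>
    have hv : k.val < m := ZMod.val_lt k
    show nf m k.val ≤ m
    unfold nf; omega
  | sr k =>
    have hv : k.val < m := ZMod.val_lt k
    show ng m k.val ≤ m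
    unfold ng; split_ifs <;> omega

include hm in
lemma NL_x0 : NL m (x0 m) = m := by
  haveI : NeZero m := ⟨by omega⟩
  rw [x0]
  by_cases he : Even m
  · have hpar : m % 2 = 0 := Nat.even_iff.mp he
    rw [if_pos he]
    show nf m (((m / 2 : ℕ) : ZMod m)).val = m
    rw [ZMod.val_cast_of_lt (by omega)]
    unfold nf; omega
  · have hpar : m % 2 = 1 := Nat.odd_iff.mp (Nat.not_even_iff_odd.mp he)
    rw [if_neg he]
    show ng m ((((m + 1) / 2 : ℕ) : ZMod m)).val = m
    rw [ZMod.val_cast_of_lt (by omega)]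
    unfold ng
    split_ifs <;> omega

include hm in
lemma NL_eq_m_unique (x : DihedralGroup m) (h : NL m x = m) : x = x0 m := by
  haveI : NeZero m := ⟨by omega⟩
  cases x with
  | r k =>
    have hv : k.val < m := ZMod.val_lt k
    have h' : nf m k.val = m := h
    by_cases he : Even m
    · have hpar : m % 2 = 0 := Nat.even_iff.mp he
      have hval : k.val = m / 2 := by unfold nf at h'; omega
      rw [x0, if_pos he, ← hval, ZMod.natCast_zmod_val]
    · have hpar : m % 2 = 1 := Nat.odd_iff.mp (Nat.not_even_iff_odd.mp he)
      exfalso; unfold nf at h'; omega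
  | sr k =>
    have hv : k.val < m := ZMod.val_lt k
    have h' : ng m k.val = m := h
    by_cases he : Even m
    · have hpar : m % 2 = 0 := Nat.even_iff.mp he
      exfalso; unfold ng at h'; split_ifs at h' <;> omega
    · have hpar : m % 2 = 1 := Nat.odd_iff.mp (Nat.not_even_iff_odd.mp he)
      have hval : k.val = (m + 1) / 2 := by unfold ng at h'; split_ifs at h' <;> omega
      rw [x0, if_neg he, ← hval, ZMod.natCast_zmod_val]

lemma parabolic_empty : parabolic cs (∅ : Finset (Fin 2)) = ⊥ := by
  rw [parabolic]
  simp

lemma parabolic_univ : parabolic cs (Finset.univ : Finset (Fin 2)) = ⊤ := by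
  rw [parabolic, Finset.coe_univ, Set.image_univ]
  exact cs.subgroup_closure_range_simple

include hm in
lemma longest_spec (I : Finset (Fin 2)) :
    longest cs I ∈ parabolic cs I ∧
      ∀ u ∈ parabolic cs I, cs.length u ≤ cs.length (longest cs I) := by
  haveI : Finite ((I2 m hm).Group) := finiteW cs
  have hex : ∃ w ∈ parabolic cs I, ∀ u ∈ parabolic cs I, cs.length u ≤ cs.length w := by
    obtain ⟨a, ha, hmax⟩ := Set.exists_max_image
      ((parabolic cs I : Set ((I2 m hm).Group))) cs.length (Set.toFinite _) ⟨1, one_mem _⟩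
    exact ⟨a, ha, hmax⟩
  unfold longest
  rw [dif_pos hex]
  exact ⟨hex.choose_spec.1, hex.choose_spec.2⟩

include hm in
lemma longest_empty : longest cs (∅ : Finset (Fin 2)) = 1 := by
  have h := (longest_spec cs ∅).1
  rw [parabolic_empty, Subgroup.mem_bot] at h
  exact h

lemma mem_parabolic_singleton {i : Fin 2} {w : (I2 m hm).Group}
    (h : w ∈ parabolic cs {i}) : w = 1 ∨ w = cs.simple i := by
  rw [parabolic, Finset.coe_singleton, Set.image_singleton] at h
  induction h using Subgroup.closure_induction with
  | mem x hx => right; exact hx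
  | one => left; rfl
  | mul x y hx hy ihx ihy =>
      rcases ihx with h1 | h1 <;> rcases ihy with h2 | h2 <;> subst h1 <;> subst h2 <;>
        simp
  | inv x hx ihx =>
      rcases ihx with h1 | h1 <;> subst h1 <;> simp

include hm in
lemma longest_singleton (i : Fin 2) :
    longest cs {i} = 1 ∨ longest cs {i} = cs.simple i :=
  mem_parabolic_singleton cs (longest_spec cs {i}).1

include hm in
lemma longest_univ_eq : longest cs (Finset.univ : Finset (Fin 2)) = sec cs (x0 m) := by
  obtain ⟨hmem, hmax⟩ := longest_spec cs (Finset.univ : Finset (Fin 2))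
  set w := longest cs (Finset.univ : Finset (Fin 2)) with hw
  have h1 : cs.length w ≤ NL m (psi cs w) := length_le_NL cs w
  have h2 : m ≤ cs.length (sec cs (x0 m)) := by
    have := NL_psi_le cs (sec cs (x0 m))
    rw [psi_sec] at this
    rw [NL_x0 (hm := hm)] at this
    exact this
  have h3 : cs.length (sec cs (x0 m)) ≤ cs.length w := by
    apply hmax
    rw [parabolic_univ]
    trivial
  have h4 : NL m (psi cs w) ≤ m := NL_le_m (hm := hm) _
  have h5 : NL m (psi cs w) = m := by omega
  have h6 : psi cs w = x0 m := NL_eq_m_unique (hm := hm) _ h5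
  calc w = sec cs (psi cs w) := (sec_psi cs w).symm
    _ = sec cs (x0 m) := by rw [h6]

include hm in
lemma longest_univ_conj (i : Fin 2) :
    longest cs Finset.univ * cs.simple i * (longest cs Finset.univ)⁻¹ =
      cs.simple (if Even m then i else 1 - i) := by
  haveI : NeZero m := ⟨by omega⟩
  apply psi_injective cs
  rw [map_mul, map_mul, map_inv, psi_simple, psi_simple, longest_univ_eq, psi_sec]
  by_cases he : Even m
  · have hpar : m % 2 = 0 := Nat.even_iff.mp he
    rw [x0, if_pos he, if_pos he]
    have hinv : (DihedralGroup.r ((m / 2 : ℕ) : ZMod m))⁻¹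
        = DihedralGroup.r (-((m / 2 : ℕ) : ZMod m)) := by
      apply inv_eq_of_mul_eq_one_right
      rw [r_mul_r, add_neg_cancel, one_def]
    rw [hinv, r_mul_sr, sr_mul_r]
    congr 1
    have h2 : ((m / 2 : ℕ) : ZMod m) + ((m / 2 : ℕ) : ZMod m) = 0 := by
      rw [← Nat.cast_add]
      have : m / 2 + m / 2 = m := by omega
      rw [this, ZMod.natCast_self]
    have : (↑i.val - ↑(m / 2) : ZMod m) + -↑(m / 2) = ↑i.val - (↑(m / 2) + ↑(m / 2)) := by ring
    rw [this, h2, sub_zero]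
  · have hpar : m % 2 = 1 := Nat.odd_iff.mp (Nat.not_even_iff_odd.mp he)
    rw [x0, if_neg he, if_neg he]
    have hinv : (DihedralGroup.sr (((m + 1) / 2 : ℕ) : ZMod m))⁻¹
        = DihedralGroup.sr (((m + 1) / 2 : ℕ) : ZMod m) :=
      inv_eq_of_mul_eq_one_right (sr_mul_self _)
    rw [hinv, sr_mul_sr, r_mul_sr]
    congr 1
    have h2 : (((m + 1) / 2 : ℕ) : ZMod m) + (((m + 1) / 2 : ℕ) : ZMod m) = 1 := by
      rw [← Nat.cast_add]
      have : (m + 1) / 2 + (m + 1) / 2 = m + 1 := by omega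
      rw [this, Nat.cast_add, ZMod.natCast_self, Nat.cast_one, zero_add]
    have h3 : (↑(((m + 1) / 2 : ℕ)) - (↑i.val - ↑(((m + 1) / 2 : ℕ))) : ZMod m)
        = (↑(((m + 1) / 2 : ℕ)) + ↑(((m + 1) / 2 : ℕ))) - ↑i.val := by ring
    rw [h3, h2]
    fin_cases i
    · norm_num
    · norm_num

include hm in
lemma simple_ne : cs.simple 0 ≠ cs.simple 1 := by
  haveI : NeZero m := ⟨by omega⟩
  haveI : Fact (1 < m) := ⟨by omega⟩
  intro h
  have h2 := congrArg (psi cs) h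
  rw [psi_simple, psi_simple] at h2
  simp only [DihedralGroup.sr.injEq] at h2
  have h3 := congrArg ZMod.val h2
  rw [show ((Fin.val (0 : Fin 2) : ℕ) : ZMod m) = 0 by norm_num,
    show ((Fin.val (1 : Fin 2) : ℕ) : ZMod m) = 1 by norm_num, ZMod.val_zero, ZMod.val_one] at h3
  omega

include hm in
lemma simple_inj {i j : Fin 2} (h : cs.simple i = cs.simple j) : i = j := by
  fin_cases i <;> fin_cases j <;> first
    | rfl
    | exact absurd h (simple_ne cs)
    | exact absurd h.symm (simple_ne cs)

include hm in
lemma sphAll (I : Finset (Fin 2)) : IsSpherical cs I := by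
  haveI : Finite ((I2 m hm).Group) := finiteW cs
  exact Subtype.finite

/-! ### Presented group helpers -/

lemma mk_rel_eq_one {α : Type*} {rels : Set (FreeGroup α)} {r : FreeGroup α} (h : r ∈ rels) :
    PresentedGroup.mk rels r = 1 :=
  (QuotientGroup.eq_one_iff r).mpr (Subgroup.subset_normalClosure h)

lemma of_rel_swap {G : Type*} [Group G] {a b k : G} (h : a * b * k⁻¹ * b⁻¹ = 1) :
    a * b = b * k := by
  have h1 : a * b * k⁻¹ = b := by
    have := mul_inv_eq_one.mp h
    exact this
  calc a * b = a * b * k⁻¹ * k := by rw [inv_mul_cancel_right]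
    _ = b * k := by rw [h1]

/-! ### Relations in the target presentation -/

lemma Psq (m : ℕ) (j : Fin 3) :
    (PresentedGroup.of j : PresentedGroup (dihedralCactusRels m)) * PresentedGroup.of j = 1 := by
  have h : (FreeGroup.of j * FreeGroup.of j : FreeGroup (Fin 3)) ∈ dihedralCactusRels m := by
    fin_cases j <;> simp [dihedralCactusRels]
  have h2 := mk_rel_eq_one h
  rwa [map_mul] at h2

lemma Pinv (m : ℕ) (j : Fin 3) :
    (PresentedGroup.of j : PresentedGroup (dihedralCactusRels m))⁻¹ = PresentedGroup.of j :=
  inv_eq_of_mul_eq_one_right (Psq m j)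

lemma Pconj0 (m : ℕ) :
    (PresentedGroup.of 2 : PresentedGroup (dihedralCactusRels m)) * PresentedGroup.of 0 *
      PresentedGroup.of 2 * (PresentedGroup.of (if Even m then 0 else 1))⁻¹ = 1 := by
  have h : (FreeGroup.of 2 * FreeGroup.of 0 * FreeGroup.of 2 *
      (FreeGroup.of (if Even m then 0 else 1))⁻¹ : FreeGroup (Fin 3)) ∈ dihedralCactusRels m := by
    simp [dihedralCactusRels]
  have h2 := mk_rel_eq_one h
  rwa [map_mul, map_mul, map_mul, map_inv] at h2

lemma Pconj1 (m : ℕ) :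
    (PresentedGroup.of 2 : PresentedGroup (dihedralCactusRels m)) * PresentedGroup.of 1 *
      PresentedGroup.of 2 * (PresentedGroup.of (if Even m then 1 else 0))⁻¹ = 1 := by
  have h : (FreeGroup.of 2 * FreeGroup.of 1 * FreeGroup.of 2 *
      (FreeGroup.of (if Even m then 1 else 0))⁻¹ : FreeGroup (Fin 3)) ∈ dihedralCactusRels m := by
    simp [dihedralCactusRels]
  have h2 := mk_rel_eq_one h
  rwa [map_mul, map_mul, map_mul, map_inv] at h2

lemma Pswap0 (m : ℕ) :
    (PresentedGroup.of 0 : PresentedGroup (dihedralCactusRels m)) * PresentedGroup.of 2 =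
      PresentedGroup.of 2 * PresentedGroup.of (if Even m then 0 else 1) := by
  have h := of_rel_swap (a := (PresentedGroup.of 0 : PresentedGroup (dihedralCactusRels m)))
    (b := PresentedGroup.of 2) (k := PresentedGroup.of (if Even m then 0 else 1)) ?_
  · exact h
  · have h2 := Pconj0 m
    calc (PresentedGroup.of 0 : PresentedGroup (dihedralCactusRels m)) * PresentedGroup.of 2 *
          (PresentedGroup.of (if Even m then 0 else 1))⁻¹ * (PresentedGroup.of 2)⁻¹
        = (PresentedGroup.of 2)⁻¹ * (PresentedGroup.of 2 * PresentedGroup.of 0 *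
            PresentedGroup.of 2 * (PresentedGroup.of (if Even m then 0 else 1))⁻¹) *
            (PresentedGroup.of 2)⁻¹ := by group
      _ = (PresentedGroup.of 2)⁻¹ * 1 * (PresentedGroup.of 2)⁻¹ := by rw [h2]
      _ = (PresentedGroup.of 2)⁻¹ * (PresentedGroup.of 2)⁻¹ := by rw [mul_one]
      _ = PresentedGroup.of 2 * PresentedGroup.of 2 := by rw [Pinv]
      _ = 1 := Psq m 2

lemma Pswap1 (m : ℕ) :
    (PresentedGroup.of 1 : PresentedGroup (dihedralCactusRels m)) * PresentedGroup.of 2 =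
      PresentedGroup.of 2 * PresentedGroup.of (if Even m then 1 else 0) := by
  have h := of_rel_swap (a := (PresentedGroup.of 1 : PresentedGroup (dihedralCactusRels m)))
    (b := PresentedGroup.of 2) (k := PresentedGroup.of (if Even m then 1 else 0)) ?_
  · exact h
  · have h2 := Pconj1 m
    calc (PresentedGroup.of 1 : PresentedGroup (dihedralCactusRels m)) * PresentedGroup.of 2 *
          (PresentedGroup.of (if Even m then 1 else 0))⁻¹ * (PresentedGroup.of 2)⁻¹
        = (PresentedGroup.of 2)⁻¹ * (PresentedGroup.of 2 * PresentedGroup.of 1 *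
            PresentedGroup.of 2 * (PresentedGroup.of (if Even m then 1 else 0))⁻¹) *
            (PresentedGroup.of 2)⁻¹ := by group
      _ = (PresentedGroup.of 2)⁻¹ * 1 * (PresentedGroup.of 2)⁻¹ := by rw [h2]
      _ = (PresentedGroup.of 2)⁻¹ * (PresentedGroup.of 2)⁻¹ := by rw [mul_one]
      _ = PresentedGroup.of 2 * PresentedGroup.of 2 := by rw [Pinv]
      _ = 1 := Psq m 2

/-! ### The generator assignment -/

def X (m : ℕ) (A : Finset (Fin 2)) : PresentedGroup (dihedralCactusRels m) :=
  if A = ∅ then 1 else if A = {0} then .of 0 else if A = {1} then .of 1 else .of 2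

lemma X_empty (m : ℕ) : X m ∅ = 1 := if_pos rfl

lemma X_s0 (m : ℕ) : X m {0} = PresentedGroup.of 0 := by
  rw [X, if_neg (by decide), if_pos rfl]

lemma X_s1 (m : ℕ) : X m {1} = PresentedGroup.of 1 := by
  rw [X, if_neg (by decide), if_neg (by decide), if_pos rfl]

lemma X_univ (m : ℕ) : X m Finset.univ = PresentedGroup.of 2 := by
  rw [X, if_neg (by decide), if_neg (by decide), if_neg (by decide)]

lemma Xsq (m : ℕ) (A : Finset (Fin 2)) : X m A * X m A = 1 := by
  rw [X]
  split_ifs with h1 h2 h3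
  · exact one_mul 1
  · exact Psq m 0
  · exact Psq m 1
  · exact Psq m 2

lemma finset2 (A : Finset (Fin 2)) : A = ∅ ∨ A = {0} ∨ A = {1} ∨ A = Finset.univ := by
  revert A; decide

/-! ### Determination of subsets from simple images -/

include hm in
lemma eq_singleton_of_img {K : Finset (Fin 2)} {j : Fin 2}
    (h : cs.simple '' (K : Set (Fin 2)) = {cs.simple j}) : K = {j} := by
  rcases finset2 K with hK | hK | hK | hK
  · subst hK
    simp only [Finset.coe_empty, Set.image_empty] at h
    exact absurd h.symm (Set.singleton_ne_empty _)
  · subst hK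
    rw [Finset.coe_singleton, Set.image_singleton, Set.singleton_eq_singleton_iff] at h
    rw [simple_inj cs h]
  · subst hK
    rw [Finset.coe_singleton, Set.image_singleton, Set.singleton_eq_singleton_iff] at h
    rw [simple_inj cs h]
  · subst hK
    exfalso
    have h0 : cs.simple 0 ∈ cs.simple '' ((Finset.univ : Finset (Fin 2)) : Set (Fin 2)) :=
      ⟨0, by simp, rfl⟩
    have h1 : cs.simple 1 ∈ cs.simple '' ((Finset.univ : Finset (Fin 2)) : Set (Fin 2)) :=
      ⟨1, by simp, rfl⟩
    rw [h] at h0 h1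
    exact simple_ne cs (h0.trans h1.symm)

include hm in
lemma eq_univ_of_img {K : Finset (Fin 2)}
    (h : cs.simple '' (K : Set (Fin 2)) = {cs.simple 0, cs.simple 1}) : K = Finset.univ := by
  rcases finset2 K with hK | hK | hK | hK
  · subst hK
    simp only [Finset.coe_empty, Set.image_empty] at h
    exact absurd h (by
      intro hcon
      have : cs.simple 0 ∈ (∅ : Set ((I2 m hm).Group)) := by
        rw [hcon]; left; rfl
      exact this)
  · subst hK
    exfalso
    rw [Finset.coe_singleton, Set.image_singleton] at h
    have h1 : cs.simple 1 ∈ ({cs.simple 0} : Set ((I2 m hm).Group)) := by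
      rw [h]; right; rfl
    exact simple_ne cs (h1.symm : cs.simple 0 = cs.simple 1)
  · subst hK
    exfalso
    rw [Finset.coe_singleton, Set.image_singleton] at h
    have h1 : cs.simple 0 ∈ ({cs.simple 1} : Set ((I2 m hm).Group)) := by
      rw [h]; left; rfl
    exact simple_ne cs h1
  · exact hK

include hm in
lemma img_univ_simple :
    cs.simple '' ((Finset.univ : Finset (Fin 2)) : Set (Fin 2)) =
      {cs.simple 0, cs.simple 1} := by
  rw [Finset.coe_univ, Set.image_univ]
  ext x
  simp only [Set.mem_range, Set.mem_insert_iff, Set.mem_singleton_iff]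
  constructor
  · rintro ⟨i, rfl⟩
    fin_cases i
    · left; rfl
    · right; rfl
  · rintro (rfl | rfl)
    · exact ⟨0, rfl⟩
    · exact ⟨1, rfl⟩

/-! ### Relations in the cactus group -/

noncomputable def el (A : Finset (Fin 2)) : Sph cs := ⟨A, sphAll cs A⟩

@[simp] lemma el_fst (A : Finset (Fin 2)) : (el cs A).1 = A := rfl

lemma cact_sq (I : Sph cs) :
    (PresentedGroup.of I : CactusGroup (I2 m hm) cs) * PresentedGroup.of I = 1 := by
  have h : (FreeGroup.of I * FreeGroup.of I : FreeGroup (Sph cs)) ∈ cactusRels (I2 m hm) cs :=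
    Or.inl ⟨I, rfl⟩
  have h2 := mk_rel_eq_one h
  rwa [map_mul] at h2

lemma cact_empty : (PresentedGroup.of (el cs ∅) : CactusGroup (I2 m hm) cs) = 1 := by
  have h : (FreeGroup.of (el cs ∅) * FreeGroup.of (el cs ∅) * (FreeGroup.of (el cs ∅))⁻¹ :
      FreeGroup (Sph cs)) ∈ cactusRels (I2 m hm) cs :=
    Or.inr (Or.inl ⟨el cs ∅, el cs ∅, el cs ∅, by simp, by simp, by simp, rfl⟩)
  have h2 := mk_rel_eq_one h
  rw [map_mul, map_mul, map_inv, mul_inv_cancel_right] at h2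
  exact h2

lemma cact_conj (i : Fin 2) :
    (PresentedGroup.of (el cs {i}) : CactusGroup (I2 m hm) cs) *
        PresentedGroup.of (el cs Finset.univ) =
      PresentedGroup.of (el cs Finset.univ) *
        PresentedGroup.of (el cs {if Even m then i else 1 - i}) := by
  apply of_rel_swap
  have h : (FreeGroup.of (el cs {i}) * FreeGroup.of (el cs Finset.univ) *
      (FreeGroup.of (el cs {if Even m then i else 1 - i}))⁻¹ *
      (FreeGroup.of (el cs Finset.univ))⁻¹ : FreeGroup (Sph cs)) ∈ cactusRels (I2 m hm) cs := by
    refine Or.inr (Or.inr ⟨el cs {i}, el cs Finset.univ,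
      el cs {if Even m then i else 1 - i}, ?_, ?_, rfl⟩)
    · exact Finset.subset_univ _
    · show cs.simple '' (({if Even m then i else 1 - i} : Finset (Fin 2)) : Set (Fin 2)) = _
      rw [Finset.coe_singleton, Set.image_singleton]
      show _ = (fun w => longest cs Finset.univ * w * (longest cs Finset.univ)⁻¹) ''
        (cs.simple '' (({i} : Finset (Fin 2)) : Set (Fin 2)))
      rw [Finset.coe_singleton, Set.image_singleton, Set.image_singleton,
        longest_univ_conj cs i]
  have h2 := mk_rel_eq_one h
  rw [map_mul, map_mul, map_mul, map_inv, map_inv] at h2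
  exact h2

/-! ### The homomorphism from the cactus group to the explicit presentation -/

include hm in
lemma rels_f : ∀ r ∈ cactusRels (I2 m hm) cs,
    FreeGroup.lift (fun I : Sph cs => X m I.1) r = 1 := by
  intro r hr
  rcases hr with ⟨I, rfl⟩ | ⟨I, J, U, hdis, hM2, hU, rfl⟩ | ⟨I, J, K, hsub, himg, rfl⟩
  · simp only [map_mul, FreeGroup.lift_apply_of]
    exact Xsq m I.1
  · have hcases : I.1 = ∅ ∨ J.1 = ∅ := by
      by_contra hc
      push_neg at hc
      obtain ⟨hI, hJ⟩ := hc
      obtain ⟨i, hi⟩ := hI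
      obtain ⟨j, hj⟩ := hJ
      have hne : i ≠ j := by
        intro hij; subst hij
        exact (Finset.disjoint_left.mp hdis hi) hj
      have h2 := hM2 i hi j hj
      rw [I2_apply_ne hne] at h2
      omega
    simp only [map_mul, map_inv, FreeGroup.lift_apply_of]
    rcases hcases with h | h
    · rw [hU, h, Finset.empty_union, X_empty, one_mul, mul_inv_cancel]
    · rw [hU, h, Finset.union_empty, X_empty, mul_one, mul_inv_cancel]
  · simp only [map_mul, map_inv, FreeGroup.lift_apply_of]
    have hKempty : I.1 = ∅ → K.1 = ∅ := by
      intro hI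
      rw [hI] at himg
      simp only [Finset.coe_empty, Set.image_empty] at himg
      exact Finset.coe_eq_empty.mp (Set.image_eq_empty.mp himg)
    rcases finset2 J.1 with hJ | hJ | hJ | hJ
    · have hI : I.1 = ∅ := Finset.subset_empty.mp (hJ ▸ hsub)
      rw [hI, hJ, hKempty hI, X_empty]
      group
    · rcases Finset.subset_singleton_iff.mp (hJ ▸ hsub) with hI | hI
      · rw [hI, hJ, hKempty hI, X_empty]
        group
      · have hconj : (fun w => longest cs J.1 * w * (longest cs J.1)⁻¹) ''
            (cs.simple '' (I.1 : Set (Fin 2))) = {cs.simple 0} := by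
          rw [hI, hJ, Finset.coe_singleton, Set.image_singleton, Set.image_singleton]
          rcases longest_singleton cs (0 : Fin 2) with h | h <;> rw [h] <;> simp
        have hK : K.1 = {0} := eq_singleton_of_img cs (himg.trans hconj)
        rw [hI, hJ, hK]
        group
    · rcases Finset.subset_singleton_iff.mp (hJ ▸ hsub) with hI | hI
      · rw [hI, hJ, hKempty hI, X_empty]
        group
      · have hconj : (fun w => longest cs J.1 * w * (longest cs J.1)⁻¹) ''
            (cs.simple '' (I.1 : Set (Fin 2))) = {cs.simple 1} := by
          rw [hI, hJ, Finset.coe_singleton, Set.image_singleton, Set.image_singleton]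
          rcases longest_singleton cs (1 : Fin 2) with h | h <;> rw [h] <;> simp
        have hK : K.1 = {1} := eq_singleton_of_img cs (himg.trans hconj)
        rw [hI, hJ, hK]
        group
    · rcases finset2 I.1 with hI | hI | hI | hI
      · rw [hI, hJ, hKempty hI, X_empty]
        group
      · have hconj : (fun w => longest cs J.1 * w * (longest cs J.1)⁻¹) ''
            (cs.simple '' (I.1 : Set (Fin 2))) = {cs.simple (if Even m then 0 else 1 - 0)} := by
          rw [hI, hJ, Finset.coe_singleton, Set.image_singleton, Set.image_singleton,
            longest_univ_conj cs 0]
        have hK : K.1 = {if Even m then 0 else 1 - 0} :=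
          eq_singleton_of_img cs (himg.trans hconj)
        rw [hI, hJ, hK, X_univ, X_s0]
        by_cases he : Even m
        · rw [if_pos he, X_s0]
          have hsw := Pswap0 m
          rw [if_pos he] at hsw
          rw [hsw]
          group
        · rw [if_neg he, show (1 - 0 : Fin 2) = 1 from rfl, X_s1]
          have hsw := Pswap0 m
          rw [if_neg he] at hsw
          rw [hsw]
          group
      · have hconj : (fun w => longest cs J.1 * w * (longest cs J.1)⁻¹) ''
            (cs.simple '' (I.1 : Set (Fin 2))) = {cs.simple (if Even m then 1 else 1 - 1)} := by
          rw [hI, hJ, Finset.coe_singleton, Set.image_singleton, Set.image_singleton,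
            longest_univ_conj cs 1]
        have hK : K.1 = {if Even m then 1 else 1 - 1} :=
          eq_singleton_of_img cs (himg.trans hconj)
        rw [hI, hJ, hK, X_univ, X_s1]
        by_cases he : Even m
        · rw [if_pos he, X_s1]
          have hsw := Pswap1 m
          rw [if_pos he] at hsw
          rw [hsw]
          group
        · rw [if_neg he, show (1 - 1 : Fin 2) = 0 from rfl, X_s0]
          have hsw := Pswap1 m
          rw [if_neg he] at hsw
          rw [hsw]
          group
      · have hK : K.1 = Finset.univ := by
          rw [hI, hJ, img_univ_simple cs] at himg
          rw [Set.image_insert_eq, Set.image_singleton, longest_univ_conj cs 0,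
            longest_univ_conj cs 1] at himg
          by_cases he : Even m
          · rw [if_pos he, if_pos he] at himg
            exact eq_univ_of_img cs himg
          · rw [if_neg he, if_neg he, show (1 - 0 : Fin 2) = 1 from rfl,
              show (1 - 1 : Fin 2) = 0 from rfl, Set.pair_comm] at himg
            exact eq_univ_of_img cs himg
        rw [hI, hJ, hK]
        group

lemma conj_from_swap {G : Type*} [Group G] {a b k : G} (hb : b * b = 1) (h : a * b = b * k) :
    b * a * b * k⁻¹ = 1 := by
  calc b * a * b * k⁻¹ = b * (a * b) * k⁻¹ := by rw [mul_assoc b a b]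
    _ = b * (b * k) * k⁻¹ := by rw [h]
    _ = b * b * k * k⁻¹ := by rw [← mul_assoc]
    _ = 1 := by rw [hb, one_mul, mul_inv_cancel]

noncomputable def fC : CactusGroup (I2 m hm) cs →* PresentedGroup (dihedralCactusRels m) :=
  PresentedGroup.toGroup (rels_f cs)

@[simp] lemma fC_of (I : Sph cs) : fC cs (.of I) = X m I.1 :=
  PresentedGroup.toGroup.of (rels_f cs)

noncomputable def genC : Fin 3 → CactusGroup (I2 m hm) cs :=
  fun j => if j = 0 then .of (el cs {0}) else if j = 1 then .of (el cs {1})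
    else .of (el cs Finset.univ)

lemma genC_0 : genC cs 0 = .of (el cs {0}) := if_pos rfl
lemma genC_1 : genC cs 1 = .of (el cs {1}) := by
  rw [genC, if_neg (by decide), if_pos rfl]
lemma genC_2 : genC cs 2 = .of (el cs Finset.univ) := by
  rw [genC, if_neg (by decide), if_neg (by decide)]

include hm in
lemma rels_g : ∀ r ∈ dihedralCactusRels m, FreeGroup.lift (genC cs) r = 1 := by
  intro r hr
  simp only [dihedralCactusRels, Set.mem_insert_iff, Set.mem_singleton_iff] at hr
  have hSsq := cact_sq cs (el cs Finset.univ)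
  rcases hr with rfl | rfl | rfl | rfl | rfl
  · simp only [map_mul, FreeGroup.lift_apply_of, genC_0]
    exact cact_sq cs _
  · simp only [map_mul, FreeGroup.lift_apply_of, genC_1]
    exact cact_sq cs _
  · simp only [map_mul, FreeGroup.lift_apply_of, genC_2]
    exact cact_sq cs _
  · simp only [map_mul, map_inv, FreeGroup.lift_apply_of, genC_0, genC_1, genC_2]
    have h1 := cact_conj cs 0
    by_cases he : Even m
    · rw [if_pos he] at h1 ⊢
      rw [genC_0]
      exact conj_from_swap hSsq h1
    · rw [if_neg he] at h1 ⊢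
      rw [genC_1, show (1 - 0 : Fin 2) = 1 from rfl] at *
      exact conj_from_swap hSsq h1
  · simp only [map_mul, map_inv, FreeGroup.lift_apply_of, genC_0, genC_1, genC_2]
    have h1 := cact_conj cs 1
    by_cases he : Even m
    · rw [if_pos he] at h1 ⊢
      rw [genC_1]
      exact conj_from_swap hSsq h1
    · rw [if_neg he] at h1 ⊢
      rw [genC_0, show (1 - 1 : Fin 2) = 0 from rfl] at *
      exact conj_from_swap hSsq h1

noncomputable def gC : PresentedGroup (dihedralCactusRels m) →* CactusGroup (I2 m hm) cs :=
  PresentedGroup.toGroup (rels_g cs)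

@[simp] lemma gC_of (j : Fin 3) : gC cs (.of j) = genC cs j :=
  PresentedGroup.toGroup.of (rels_g cs)

include hm in
lemma gf_id : (gC cs).comp (fC cs) = MonoidHom.id _ := by
  apply PresentedGroup.ext
  intro I
  simp only [MonoidHom.comp_apply, MonoidHom.id_apply, fC_of]
  rcases finset2 I.1 with hI | hI | hI | hI
  · rw [hI, X_empty, map_one]
    have hIe : I = el cs ∅ := Subtype.ext hI
    rw [hIe, cact_empty]
  · rw [hI, X_s0, gC_of, genC_0]
    exact congrArg _ (Subtype.ext hI.symm)
  · rw [hI, X_s1, gC_of, genC_1]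
    exact congrArg _ (Subtype.ext hI.symm)
  · rw [hI, X_univ, gC_of, genC_2]
    exact congrArg _ (Subtype.ext hI.symm)

include hm in
lemma fg_id : (fC cs).comp (gC cs) = MonoidHom.id _ := by
  apply PresentedGroup.ext
  intro j
  simp only [MonoidHom.comp_apply, MonoidHom.id_apply, gC_of]
  fin_cases j
  · rw [show (⟨0, by omega⟩ : Fin 3) = 0 from rfl, genC_0, fC_of, el_fst, X_s0]
  · rw [show (⟨1, by omega⟩ : Fin 3) = 1 from rfl, genC_1, fC_of, el_fst, X_s1]
  · rw [show (⟨2, by omega⟩ : Fin 3) = 2 from rfl, genC_2, fC_of, el_fst, X_univ]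

include hm in
lemma iso_main :
    Nonempty (CactusGroup (I2 m hm) cs ≃* PresentedGroup (dihedralCactusRels m)) :=
  ⟨MonoidHom.toMulEquiv (fC cs) (gC cs) (gf_id cs) (fg_id cs)⟩

/-! ### ℤ/2 helpers -/

lemma C2_cases (x : C2) : x = 1 ∨ x = Multiplicative.ofAdd 1 := by revert x; decide

def toC2hom {G : Type*} [Monoid G] (g : G) (h : g * g = 1) : C2 →* G where
  toFun x := if x = 1 then 1 else g
  map_one' := if_pos rfl
  map_mul' x y := by
    have hne : (Multiplicative.ofAdd (1 : ZMod 2)) ≠ 1 := by decide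
    have hsq : (Multiplicative.ofAdd (1 : ZMod 2)) * (Multiplicative.ofAdd 1) = 1 := by decide
    show (if x * y = 1 then 1 else g) = (if x = 1 then 1 else g) * (if y = 1 then 1 else g)
    rcases C2_cases x with rfl | rfl <;> rcases C2_cases y with rfl | rfl
    · rw [one_mul, if_pos rfl, one_mul]
    · rw [one_mul, if_pos rfl, one_mul]
    · rw [mul_one, if_pos rfl, mul_one]
    · rw [hsq, if_pos rfl, if_neg hne]
      exact h.symm

lemma toC2hom_gen {G : Type*} [Monoid G] (g : G) (h : g * g = 1) :
    toC2hom g h (Multiplicative.ofAdd 1) = g := by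
  show (if (Multiplicative.ofAdd (1 : ZMod 2)) = 1 then (1 : G) else g) = g
  rw [if_neg (by decide : ¬ (Multiplicative.ofAdd (1 : ZMod 2) : C2) = 1)]

lemma C2_hom_ext {G : Type*} [Monoid G] {f₁ f₂ : C2 →* G}
    (h : f₁ (Multiplicative.ofAdd 1) = f₂ (Multiplicative.ofAdd 1)) : f₁ = f₂ := by
  apply MonoidHom.ext; intro x
  rcases C2_cases x with rfl | rfl
  · rw [map_one, map_one]
  · exact h

lemma PconjEq0 (m : ℕ) :
    (PresentedGroup.of 2 : PresentedGroup (dihedralCactusRels m)) * PresentedGroup.of 0 *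
      PresentedGroup.of 2 = PresentedGroup.of (if Even m then 0 else 1) :=
  mul_inv_eq_one.mp (Pconj0 m)

lemma PconjEq1 (m : ℕ) :
    (PresentedGroup.of 2 : PresentedGroup (dihedralCactusRels m)) * PresentedGroup.of 1 *
      PresentedGroup.of 2 = PresentedGroup.of (if Even m then 1 else 0) :=
  mul_inv_eq_one.mp (Pconj1 m)

/-! ### The even case -/

lemma iso_even (m : ℕ) (he : Even m) :
    Nonempty (PresentedGroup (dihedralCactusRels m) ≃* (Coprod C2 C2) × C2) := by
  classical
  set u : C2 := Multiplicative.ofAdd 1 with hu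
  have huu : u * u = 1 := by rw [hu]; decide
  set t : Fin 3 → (Coprod C2 C2) × C2 :=
    ![(Coprod.inl u, 1), (Coprod.inr u, 1), (1, u)] with ht
  have ht0 : t 0 = (Coprod.inl u, 1) := rfl
  have ht1 : t 1 = (Coprod.inr u, 1) := rfl
  have ht2 : t 2 = (1, u) := rfl
  have hrels : ∀ r ∈ dihedralCactusRels m, FreeGroup.lift t r = 1 := by
    intro r hr
    simp only [dihedralCactusRels, Set.mem_insert_iff, Set.mem_singleton_iff] at hr
    rcases hr with rfl | rfl | rfl | rfl | rfl
    · simp only [map_mul, FreeGroup.lift_apply_of, ht0]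
      rw [Prod.mk_mul_mk, ← map_mul, huu, map_one, mul_one]
      rfl
    · simp only [map_mul, FreeGroup.lift_apply_of, ht1]
      rw [Prod.mk_mul_mk, ← map_mul, huu, map_one, mul_one]
      rfl
    · simp only [map_mul, FreeGroup.lift_apply_of, ht2]
      rw [Prod.mk_mul_mk, huu, one_mul]
      rfl
    · rw [if_pos he]
      simp only [map_mul, map_inv, FreeGroup.lift_apply_of, ht0, ht2]
      rw [Prod.inv_mk, Prod.mk_mul_mk, Prod.mk_mul_mk, Prod.mk_mul_mk]
      rw [Prod.mk_eq_one]
      constructor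
      · rw [one_mul, mul_one]
        exact mul_inv_cancel _
      · rw [inv_one, mul_one, one_mul]
        exact huu
    · rw [if_pos he]
      simp only [map_mul, map_inv, FreeGroup.lift_apply_of, ht1, ht2]
      rw [Prod.inv_mk, Prod.mk_mul_mk, Prod.mk_mul_mk, Prod.mk_mul_mk]
      rw [Prod.mk_eq_one]
      constructor
      · rw [one_mul, mul_one]
        exact mul_inv_cancel _
      · rw [inv_one, mul_one, one_mul]
        exact huu
  have hcomm0 : (PresentedGroup.of 0 : PresentedGroup (dihedralCactusRels m)) *
      PresentedGroup.of 2 = PresentedGroup.of 2 * PresentedGroup.of 0 := by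
    have h := Pswap0 m; rwa [if_pos he] at h
  have hcomm1 : (PresentedGroup.of 1 : PresentedGroup (dihedralCactusRels m)) *
      PresentedGroup.of 2 = PresentedGroup.of 2 * PresentedGroup.of 1 := by
    have h := Pswap1 m; rwa [if_pos he] at h
  set A : Coprod C2 C2 →* PresentedGroup (dihedralCactusRels m) :=
    Coprod.lift (toC2hom (.of 0) (Psq m 0)) (toC2hom (.of 1) (Psq m 1)) with hA
  set Bh : C2 →* PresentedGroup (dihedralCactusRels m) := toC2hom (.of 2) (Psq m 2) with hB
  have hcomm : ∀ a b, Commute (A a) (Bh b) := by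
    intro a b
    rcases C2_cases b with rfl | rfl
    · rw [map_one]; exact Commute.one_right _
    · rw [hB, toC2hom_gen]
      induction a using Coprod.induction_on with
      | inl x =>
        rcases C2_cases x with rfl | rfl
        · rw [map_one]; exact Commute.one_left _
        · rw [hA, Coprod.lift_apply_inl, toC2hom_gen]
          exact hcomm0
      | inr x =>
        rcases C2_cases x with rfl | rfl
        · rw [map_one]; exact Commute.one_left _
        · rw [hA, Coprod.lift_apply_inr, toC2hom_gen]
          exact hcomm1
      | mul x y hx hy => rw [map_mul]; exact hx.mul_left hy
  set F : (Coprod C2 C2) × C2 →* PresentedGroup (dihedralCactusRels m) :=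
    MonoidHom.noncommCoprod A Bh hcomm with hF
  set G' : PresentedGroup (dihedralCactusRels m) →* (Coprod C2 C2) × C2 :=
    PresentedGroup.toGroup hrels with hG
  have hGof : ∀ j, G' (.of j) = t j := fun j => PresentedGroup.toGroup.of hrels
  have h1 : F.comp G' = MonoidHom.id _ := by
    apply PresentedGroup.ext
    intro j
    simp only [MonoidHom.comp_apply, MonoidHom.id_apply, hGof]
    fin_cases j
    · rw [show (⟨0, by omega⟩ : Fin 3) = 0 from rfl, ht0, hF, MonoidHom.noncommCoprod_apply]
      rw [map_one, mul_one, hA, Coprod.lift_apply_inl, toC2hom_gen]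
    · rw [show (⟨1, by omega⟩ : Fin 3) = 1 from rfl, ht1, hF, MonoidHom.noncommCoprod_apply]
      rw [map_one, mul_one, hA, Coprod.lift_apply_inr, toC2hom_gen]
    · rw [show (⟨2, by omega⟩ : Fin 3) = 2 from rfl, ht2, hF, MonoidHom.noncommCoprod_apply]
      rw [map_one, one_mul, hB, toC2hom_gen]
  have hGA : G'.comp A = MonoidHom.inl (Coprod C2 C2) C2 := by
    apply Coprod.hom_ext
    · apply C2_hom_ext
      simp only [MonoidHom.comp_apply]
      rw [hA, Coprod.lift_apply_inl, toC2hom_gen, hGof, ht0]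
      rfl
    · apply C2_hom_ext
      simp only [MonoidHom.comp_apply]
      rw [hA, Coprod.lift_apply_inr, toC2hom_gen, hGof, ht1]
      rfl
  have hGB : G'.comp Bh = MonoidHom.inr (Coprod C2 C2) C2 := by
    apply C2_hom_ext
    simp only [MonoidHom.comp_apply]
    rw [hB, toC2hom_gen, hGof, ht2]
    rfl
  have h2 : G'.comp F = MonoidHom.id _ := by
    apply MonoidHom.ext
    intro q
    simp only [MonoidHom.comp_apply, MonoidHom.id_apply]
    rw [hF, MonoidHom.noncommCoprod_apply, map_mul]
    have e1 : G' (A q.1) = (q.1, 1) := DFunLike.congr_fun hGA q.1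
    have e2 : G' (Bh q.2) = (1, q.2) := DFunLike.congr_fun hGB q.2
    rw [e1, e2, Prod.mk_mul_mk, mul_one, one_mul]
  exact ⟨MonoidHom.toMulEquiv G' F h1 h2⟩

/-! ### The odd case -/

lemma coprodComm_sq :
    (MulEquiv.coprodComm C2 C2 : MulAut (Coprod C2 C2)) * MulEquiv.coprodComm C2 C2 = 1 := by
  apply MulEquiv.ext
  intro x
  show (MulEquiv.coprodComm C2 C2) ((MulEquiv.coprodComm C2 C2) x) = x
  show Coprod.swap C2 C2 ((Coprod.swap C2 C2) x) = x
  exact Coprod.swap_swap x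

noncomputable def phiOdd : C2 →* MulAut (Coprod C2 C2) :=
  toC2hom (MulEquiv.coprodComm C2 C2) coprodComm_sq

lemma phiOdd_gen : phiOdd (Multiplicative.ofAdd 1) = MulEquiv.coprodComm C2 C2 :=
  toC2hom_gen _ _

lemma iso_odd (m : ℕ) (he : ¬ Even m) :
    Nonempty (PresentedGroup (dihedralCactusRels m) ≃* (Coprod C2 C2) ⋊[phiOdd] C2) := by
  classical
  set u : C2 := Multiplicative.ofAdd 1 with hu
  have huu : u * u = 1 := by rw [hu]; decide
  have hphi : phiOdd u = MulEquiv.coprodComm C2 C2 := phiOdd_gen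
  set t : Fin 3 → (Coprod C2 C2) ⋊[phiOdd] C2 :=
    ![.inl (Coprod.inl u), .inl (Coprod.inr u), .inr u] with ht
  have ht0 : t 0 = .inl (Coprod.inl u) := rfl
  have ht1 : t 1 = .inl (Coprod.inr u) := rfl
  have ht2 : t 2 = .inr u := rfl
  have hinr_inv : (SemidirectProduct.inr u : (Coprod C2 C2) ⋊[phiOdd] C2)⁻¹ =
      SemidirectProduct.inr u := by
    apply inv_eq_of_mul_eq_one_right
    rw [← map_mul, huu, map_one]
  have hrels : ∀ r ∈ dihedralCactusRels m, FreeGroup.lift t r = 1 := by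
    intro r hr
    simp only [dihedralCactusRels, Set.mem_insert_iff, Set.mem_singleton_iff] at hr
    rcases hr with rfl | rfl | rfl | rfl | rfl
    · simp only [map_mul, FreeGroup.lift_apply_of, ht0]
      rw [← map_mul, ← map_mul, huu, map_one, map_one]
    · simp only [map_mul, FreeGroup.lift_apply_of, ht1]
      rw [← map_mul, ← map_mul, huu, map_one, map_one]
    · simp only [map_mul, FreeGroup.lift_apply_of, ht2]
      rw [← map_mul, huu, map_one]
    · rw [if_neg he]
      simp only [map_mul, map_inv, FreeGroup.lift_apply_of, ht0, ht1, ht2]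
      have haut := SemidirectProduct.inl_aut (φ := phiOdd) u (Coprod.inl u)
      rw [hphi] at haut
      have hsw : (MulEquiv.coprodComm C2 C2) (Coprod.inl u) = Coprod.inr u := rfl
      rw [hsw] at haut
      rw [show (u⁻¹ : C2) = u by rw [hu]; decide] at haut
      calc SemidirectProduct.inr u * SemidirectProduct.inl (Coprod.inl u) *
            SemidirectProduct.inr u * (SemidirectProduct.inl (Coprod.inr u))⁻¹
          = SemidirectProduct.inl (Coprod.inr u) *
              (SemidirectProduct.inl (Coprod.inr u))⁻¹ := by rw [← haut]
        _ = 1 := mul_inv_cancel _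
    · rw [if_neg he]
      simp only [map_mul, map_inv, FreeGroup.lift_apply_of, ht0, ht1, ht2]
      have haut := SemidirectProduct.inl_aut (φ := phiOdd) u (Coprod.inr u)
      rw [hphi] at haut
      have hsw : (MulEquiv.coprodComm C2 C2) (Coprod.inr u) = Coprod.inl u := rfl
      rw [hsw] at haut
      rw [show (u⁻¹ : C2) = u by rw [hu]; decide] at haut
      calc SemidirectProduct.inr u * SemidirectProduct.inl (Coprod.inr u) *
            SemidirectProduct.inr u * (SemidirectProduct.inl (Coprod.inl u))⁻¹
          = SemidirectProduct.inl (Coprod.inl u) *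
              (SemidirectProduct.inl (Coprod.inl u))⁻¹ := by rw [← haut]
        _ = 1 := mul_inv_cancel _
  have hodd0 : (PresentedGroup.of 2 : PresentedGroup (dihedralCactusRels m)) *
      PresentedGroup.of 0 * PresentedGroup.of 2 = PresentedGroup.of 1 := by
    have h := PconjEq0 m; rwa [if_neg he] at h
  have hodd1 : (PresentedGroup.of 2 : PresentedGroup (dihedralCactusRels m)) *
      PresentedGroup.of 1 * PresentedGroup.of 2 = PresentedGroup.of 0 := by
    have h := PconjEq1 m; rwa [if_neg he] at h
  set A : Coprod C2 C2 →* PresentedGroup (dihedralCactusRels m) :=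
    Coprod.lift (toC2hom (.of 0) (Psq m 0)) (toC2hom (.of 1) (Psq m 1)) with hA
  set Bh : C2 →* PresentedGroup (dihedralCactusRels m) := toC2hom (.of 2) (Psq m 2) with hB
  have hcompat : ∀ g : C2, A.comp (phiOdd g).toMonoidHom =
      (MulAut.conj (Bh g)).toMonoidHom.comp A := by
    intro g
    rcases C2_cases g with rfl | rfl
    · ext x <;> simp
    · rw [hphi, hB, toC2hom_gen]
      apply Coprod.hom_ext
      · apply C2_hom_ext
        simp only [MonoidHom.comp_apply, MulEquiv.coe_toMonoidHom]
        have hsw : (MulEquiv.coprodComm C2 C2) (Coprod.inl (Multiplicative.ofAdd 1)) =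
            Coprod.inr (Multiplicative.ofAdd 1) := rfl
        rw [hsw, hA, Coprod.lift_apply_inr, toC2hom_gen, MulAut.conj_apply,
          Coprod.lift_apply_inl, toC2hom_gen, Pinv, hodd0]
      · apply C2_hom_ext
        simp only [MonoidHom.comp_apply, MulEquiv.coe_toMonoidHom]
        have hsw : (MulEquiv.coprodComm C2 C2) (Coprod.inr (Multiplicative.ofAdd 1)) =
            Coprod.inl (Multiplicative.ofAdd 1) := rfl
        rw [hsw, hA, Coprod.lift_apply_inl, toC2hom_gen, MulAut.conj_apply,
          Coprod.lift_apply_inr, toC2hom_gen, Pinv, hodd1]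
  set F : (Coprod C2 C2) ⋊[phiOdd] C2 →* PresentedGroup (dihedralCactusRels m) :=
    SemidirectProduct.lift A Bh hcompat with hF
  set G' : PresentedGroup (dihedralCactusRels m) →* (Coprod C2 C2) ⋊[phiOdd] C2 :=
    PresentedGroup.toGroup hrels with hG
  have hGof : ∀ j, G' (.of j) = t j := fun j => PresentedGroup.toGroup.of hrels
  have h1 : F.comp G' = MonoidHom.id _ := by
    apply PresentedGroup.ext
    intro j
    simp only [MonoidHom.comp_apply, MonoidHom.id_apply, hGof]
    fin_cases j
    · rw [show (⟨0, by omega⟩ : Fin 3) = 0 from rfl, ht0, hF, SemidirectProduct.lift_inl,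
        hA, Coprod.lift_apply_inl, toC2hom_gen]
    · rw [show (⟨1, by omega⟩ : Fin 3) = 1 from rfl, ht1, hF, SemidirectProduct.lift_inl,
        hA, Coprod.lift_apply_inr, toC2hom_gen]
    · rw [show (⟨2, by omega⟩ : Fin 3) = 2 from rfl, ht2, hF, SemidirectProduct.lift_inr,
        hB, toC2hom_gen]
  have h2 : G'.comp F = MonoidHom.id _ := by
    apply SemidirectProduct.hom_ext
    · apply Coprod.hom_ext
      · apply C2_hom_ext
        simp only [MonoidHom.comp_apply, MonoidHom.id_apply]
        rw [hF, SemidirectProduct.lift_inl, hA, Coprod.lift_apply_inl, toC2hom_gen,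
          hGof, ht0]
      · apply C2_hom_ext
        simp only [MonoidHom.comp_apply, MonoidHom.id_apply]
        rw [hF, SemidirectProduct.lift_inl, hA, Coprod.lift_apply_inr, toC2hom_gen,
          hGof, ht1]
    · apply C2_hom_ext
      simp only [MonoidHom.comp_apply, MonoidHom.id_apply]
      rw [hF, SemidirectProduct.lift_inr, hB, toC2hom_gen, hGof, ht2]
  exact ⟨MonoidHom.toMulEquiv G' F h1 h2⟩

end Stmt18

theorem stmt_18 (m : ℕ) (hm : 3 ≤ m) (cs : CoxeterSystem (I2 m hm) (I2 m hm).Group) :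
    Nonempty (CactusGroup (I2 m hm) cs ≃* PresentedGroup (dihedralCactusRels m)) ∧
      (Even m → Nonempty (CactusGroup (I2 m hm) cs ≃* (Coprod C2 C2) × C2)) ∧
      (¬ Even m → ∃ φ : C2 →* MulAut (Coprod C2 C2),
        φ (Multiplicative.ofAdd 1) = MulEquiv.coprodComm C2 C2 ∧
        Nonempty (CactusGroup (I2 m hm) cs ≃* (Coprod C2 C2) ⋊[φ] C2)) := by
  refine ⟨Stmt18.iso_main cs, ?_, ?_⟩
  · intro he
    obtain ⟨e1⟩ := Stmt18.iso_main cs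
    obtain ⟨e2⟩ := Stmt18.iso_even m he
    exact ⟨e1.trans e2⟩
  · intro he
    refine ⟨Stmt18.phiOdd, Stmt18.phiOdd_gen, ?_⟩
    obtain ⟨e1⟩ := Stmt18.iso_main cs
    obtain ⟨e2⟩ := Stmt18.iso_odd m he
    exact ⟨e1.trans e2⟩
end
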